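/- arXiv:1408.0442 — 9 statements merged into one kernel-verified Lean document; each statement's English description precedes it below -/
import Mathlib

section
/- For integers p, t with p > t ≥ 0, the infinite series Σ_{ℓ=1}^{∞} 1/((p+ℓ)·C(p+ℓ-1, t+ℓ-1)) converges and equals 1/(p·C(p-1,t)). -/
theorem stmt2 (p t : ℕ) (hpt : t < p) :
    HasSum (fun l : ℕ => (1:ℝ)/((p+l+1) * (p+l).choose (t+l)))
      (1/(p * (p-1).choose t)) := by
  have hd : 0 < p - t := Nat.sub_pos_of_lt hpt
  set f : ℕ → ℝ := fun n => 1/(((p - t : ℕ) : ℝ) * (p+n).choose (t+n)) with hf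
  have hA : ∀ n : ℕ, 0 < (p+n).choose (t+n) :=
    fun n => Nat.choose_pos (by omega)
  -- key natural number identity
  have key : ∀ l : ℕ, (p+l+1) * ((p+l+1).choose (t+l+1)) =
      (p - t) * ((p+l+1).choose (t+l+1)) + (p+l+1) * ((p+l).choose (t+l)) := by
    intro l
    have h : (p+l+1) * ((p+l).choose (t+l)) = ((p+l+1).choose (t+l+1)) * (t+l+1) :=
      Nat.add_one_mul_choose_eq (p+l) (t+l)
    have h2 : p - t + (t+l+1) = p+l+1 := by omega
    calc (p+l+1) * ((p+l+1).choose (t+l+1))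
        = (p - t + (t+l+1)) * ((p+l+1).choose (t+l+1)) := by rw [h2]
      _ = (p - t) * ((p+l+1).choose (t+l+1)) + ((p+l+1).choose (t+l+1)) * (t+l+1) := by
          rw [Nat.add_mul, Nat.mul_comm ((t+l+1)) _]
      _ = (p - t) * ((p+l+1).choose (t+l+1)) + (p+l+1) * ((p+l).choose (t+l)) := by
          rw [← h]
  have hd0 : (0:ℝ) < ((p - t : ℕ) : ℝ) := by exact_mod_cast hd
  -- term = f l - f (l+1)
  have hterm : ∀ l : ℕ, (1:ℝ)/((p+l+1) * (p+l).choose (t+l)) = f l - f (l+1) := by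
    intro l
    have hA0 : (0:ℝ) < ((p+l).choose (t+l) : ℝ) := by exact_mod_cast hA l
    have hB0 : (0:ℝ) < ((p+l+1).choose (t+l+1) : ℝ) := by
      have := hA (l+1)
      have e1 : p + (l+1) = p + l + 1 := by ring
      have e2 : t + (l+1) = t + l + 1 := by ring
      rw [e1, e2] at this
      exact_mod_cast this
    have hkey : ((p:ℝ)+l+1) * ((p+l+1).choose (t+l+1) : ℝ) =
        ((p - t : ℕ) : ℝ) * ((p+l+1).choose (t+l+1) : ℝ)
          + ((p:ℝ)+l+1) * ((p+l).choose (t+l) : ℝ) := by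
      exact_mod_cast key l
    have hpl : (0:ℝ) < (p:ℝ)+l+1 := by positivity
    simp only [hf]
    have e1 : (p:ℕ) + (l+1) = p + l + 1 := by ring
    have e2 : (t:ℕ) + (l+1) = t + l + 1 := by ring
    rw [e1, e2]
    field_simp
    linear_combination (-1 : ℝ) * hkey
  have hnonneg : ∀ l : ℕ, 0 ≤ (1:ℝ)/((p+l+1) * (p+l).choose (t+l)) := by
    intro l; positivity
  rw [hasSum_iff_tendsto_nat_of_nonneg hnonneg]
  have hsum : ∀ n : ℕ, ∑ i ∈ Finset.range n, (1:ℝ)/((p+i+1) * (p+i).choose (t+i))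
      = f 0 - f n := by
    intro n
    calc ∑ i ∈ Finset.range n, (1:ℝ)/((p+i+1) * (p+i).choose (t+i))
        = ∑ i ∈ Finset.range n, (f i - f (i+1)) := by
          exact Finset.sum_congr rfl fun i _ => hterm i
      _ = f 0 - f n := Finset.sum_range_sub' f n
  simp only [hsum]
  -- f n → 0
  have hfto : Filter.Tendsto f Filter.atTop (nhds 0) := by
    apply squeeze_zero (fun n => by simp only [hf]; positivity)
      (g := fun n : ℕ => 1/((n:ℝ)+1))
    · intro n
      have hA0 : (0:ℝ) < ((p+n).choose (t+n) : ℝ) := by exact_mod_cast hA n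
      simp only [hf]
      rw [div_le_div_iff₀ (by positivity) (by positivity)]
      have hC : (n:ℕ) + 1 ≤ (p - t) * (p+n).choose (t+n) := by
        have h1 : (t+n+1).choose (t+n) ≤ (p+n).choose (t+n) :=
          Nat.choose_le_choose _ (by omega)
        have h2 : (t+n+1).choose (t+n) = t+n+1 := Nat.choose_succ_self_right _
        have := hA n
        nlinarith
      calc (1:ℝ) * ((n:ℝ)+1) = ((n:ℕ)+1 : ℕ) := by push_cast; ring
        _ ≤ (((p - t) * (p+n).choose (t+n) : ℕ) : ℝ) := by exact_mod_cast hC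
        _ = 1 * (((p - t : ℕ) : ℝ) * ((p+n).choose (t+n) : ℝ)) := by push_cast; ring
    · exact tendsto_one_div_add_atTop_nhds_zero_nat
  have hlim : Filter.Tendsto (fun n => f 0 - f n) Filter.atTop (nhds (f 0 - 0)) :=
    (tendsto_const_nhds).sub hfto
  rw [sub_zero] at hlim
  -- f 0 equals the claimed value
  have hf0 : f 0 = 1/((p:ℝ) * (p-1).choose t) := by
    have hnat : p * (p-1).choose t = (p - t) * p.choose t := by
      have h1 : (p-1).choose (p-1-t) = (p-1).choose t := Nat.choose_symm (by omega)
      have h2 : (p-1+1) * ((p-1).choose (p-t-1)) = ((p-1+1).choose (p-t-1+1)) * (p-t-1+1) :=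
        Nat.add_one_mul_choose_eq (p-1) (p-t-1)
      have e3 : p - 1 + 1 = p := by omega
      have e4 : p - t - 1 + 1 = p - t := by omega
      rw [e3, e4] at h2
      have h3 : p.choose (p-t) = p.choose t := by
        have := Nat.choose_symm (show t ≤ p by omega)
        exact this
      have e5 : p - 1 - t = p - t - 1 := by omega
      rw [← h1, e5, h2, h3]; ring
    simp only [hf]
    rw [show (p:ℕ) + 0 = p by ring, show (t:ℕ) + 0 = t by ring]
    congr 1
    have := congrArg (fun n : ℕ => (n : ℝ)) hnat
    push_cast at this ⊢
    linarith
  rw [← hf0]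
  exact hlim
end

section
/- Let w₁ > w₂ > ⋯ > wₙ > 0 be a super-increasing sequence, i.e., wᵢ > Σ_{j=i+1}^{n} wⱼ for all i. For subsets C₁, C₂ of {1,…,n}, define β(C) = Σ_{i∈C} 2^{n−i} and w(C) = Σ_{i∈C} wᵢ. Then β(C₁) < β(C₂) if and only if w(C₁) < w(C₂). -/
private lemma sum_two_pow' (m : ℕ) : ∑ k ∈ Finset.range m, 2^k = 2^m - 1 := by
  induction m with
  | zero => simp
  | succ m ih =>
    rw [Finset.sum_range_succ, ih, pow_succ]
    have : 1 ≤ 2^m := Nat.one_le_two_pow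
    omega

private lemma beta_lt' {n : ℕ} (i : Fin n) (D : Finset (Fin n))
    (h : ∀ j ∈ D, i < j) :
    (∑ j ∈ D, 2^(n - 1 - (j:ℕ)) : ℕ) < 2^(n - 1 - (i:ℕ)) := by
  have hinj : ∀ a ∈ D, ∀ b ∈ D,
      (fun j : Fin n => n - 1 - (j:ℕ)) a = (fun j : Fin n => n - 1 - (j:ℕ)) b → a = b := by
    intro a _ b _ hab
    have ha := a.isLt; have hb := b.isLt
    simp only at hab
    exact Fin.ext (by omega)
  calc (∑ j ∈ D, 2^(n - 1 - (j:ℕ)) : ℕ)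
      = ∑ k ∈ D.image (fun j : Fin n => n - 1 - (j:ℕ)), 2^k :=
        (Finset.sum_image hinj).symm
    _ ≤ ∑ k ∈ Finset.range (n - 1 - (i:ℕ)), 2^k := by
        apply Finset.sum_le_sum_of_subset
        intro k hk
        simp only [Finset.mem_image] at hk
        obtain ⟨j, hj, rfl⟩ := hk
        have h1 : (i:ℕ) < (j:ℕ) := h j hj
        have h2 := j.isLt
        simp only [Finset.mem_range]
        omega
    _ < 2^(n - 1 - (i:ℕ)) := by
        rw [sum_two_pow']
        have : 1 ≤ 2^(n - 1 - (i:ℕ)) := Nat.one_le_two_pow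
        omega

private lemma beta_inj' {n : ℕ} (C₁ C₂ : Finset (Fin n))
    (h : (∑ i ∈ C₁, 2^(n - 1 - (i:ℕ)) : ℕ) = ∑ i ∈ C₂, 2^(n - 1 - (i:ℕ))) :
    C₁ = C₂ := by
  by_contra hne
  set D₁ := C₁ \ C₂ with hD₁
  set D₂ := C₂ \ C₁ with hD₂
  have hs₁ : (∑ i ∈ C₁ ∩ C₂, 2^(n - 1 - (i:ℕ)) : ℕ) + ∑ i ∈ D₁, 2^(n - 1 - (i:ℕ))
      = ∑ i ∈ C₁, 2^(n - 1 - (i:ℕ)) := Finset.sum_inter_add_sum_sdiff _ _ _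
  have hs₂ : (∑ i ∈ C₂ ∩ C₁, 2^(n - 1 - (i:ℕ)) : ℕ) + ∑ i ∈ D₂, 2^(n - 1 - (i:ℕ))
      = ∑ i ∈ C₂, 2^(n - 1 - (i:ℕ)) := Finset.sum_inter_add_sum_sdiff _ _ _
  rw [Finset.inter_comm] at hs₂
  have hD : (∑ i ∈ D₁, 2^(n - 1 - (i:ℕ)) : ℕ) = ∑ i ∈ D₂, 2^(n - 1 - (i:ℕ)) := by omega
  have hne' : (D₁ ∪ D₂).Nonempty := by
    rw [Finset.nonempty_iff_ne_empty]
    intro hemp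
    rw [Finset.union_eq_empty] at hemp
    exact hne (le_antisymm (Finset.sdiff_eq_empty_iff_subset.mp hemp.1)
      (Finset.sdiff_eq_empty_iff_subset.mp hemp.2))
  set i := (D₁ ∪ D₂).min' hne' with hi
  have himem := (D₁ ∪ D₂).min'_mem hne'
  rw [Finset.mem_union] at himem
  rcases himem with hm | hm
  · have hni : i ∉ D₂ := by
      intro hc
      have : i ∈ C₂ := (Finset.mem_sdiff.mp hc).1
      exact (Finset.mem_sdiff.mp hm).2 this
    have hlt : ∀ j ∈ D₂, i < j := by
      intro j hj
      have := Finset.min'_le (D₁ ∪ D₂) j (Finset.mem_union_right _ hj)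
      rcases lt_or_eq_of_le this with h' | h'
      · exact h'
      · rw [← h'] at hj; exact absurd hj hni
    have := beta_lt' i D₂ hlt
    have hle : (2^(n - 1 - (i:ℕ)) : ℕ) ≤ ∑ j ∈ D₁, 2^(n - 1 - (j:ℕ)) :=
      Finset.single_le_sum (f := fun j : Fin n => (2:ℕ)^(n - 1 - (j:ℕ))) (fun j _ => Nat.zero_le _) hm
    omega
  · have hni : i ∉ D₁ := by
      intro hc
      have : i ∈ C₁ := (Finset.mem_sdiff.mp hc).1
      exact (Finset.mem_sdiff.mp hm).2 this
    have hlt : ∀ j ∈ D₁, i < j := by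
      intro j hj
      have := Finset.min'_le (D₁ ∪ D₂) j (Finset.mem_union_left _ hj)
      rcases lt_or_eq_of_le this with h' | h'
      · exact h'
      · rw [← h'] at hj; exact absurd hj hni
    have := beta_lt' i D₁ hlt
    have hle : (2^(n - 1 - (i:ℕ)) : ℕ) ≤ ∑ j ∈ D₂, 2^(n - 1 - (j:ℕ)) :=
      Finset.single_le_sum (f := fun j : Fin n => (2:ℕ)^(n - 1 - (j:ℕ))) (fun j _ => Nat.zero_le _) hm
    omega

private lemma key' {n : ℕ} (w : Fin n → ℝ) (hpos : ∀ i, 0 < w i)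
    (hsi : ∀ i : Fin n, (∑ j ∈ Finset.univ.filter (fun j => i < j), w j) < w i)
    (C₁ C₂ : Finset (Fin n))
    (h : (∑ i ∈ C₁, 2^(n - 1 - (i:ℕ)) : ℕ) < ∑ i ∈ C₂, 2^(n - 1 - (i:ℕ))) :
    (∑ i ∈ C₁, w i) < ∑ i ∈ C₂, w i := by
  set D₁ := C₁ \ C₂ with hD₁
  set D₂ := C₂ \ C₁ with hD₂
  have hs₁ : (∑ i ∈ C₁ ∩ C₂, 2^(n - 1 - (i:ℕ)) : ℕ) + ∑ i ∈ D₁, 2^(n - 1 - (i:ℕ))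
      = ∑ i ∈ C₁, 2^(n - 1 - (i:ℕ)) := Finset.sum_inter_add_sum_sdiff _ _ _
  have hs₂ : (∑ i ∈ C₂ ∩ C₁, 2^(n - 1 - (i:ℕ)) : ℕ) + ∑ i ∈ D₂, 2^(n - 1 - (i:ℕ))
      = ∑ i ∈ C₂, 2^(n - 1 - (i:ℕ)) := Finset.sum_inter_add_sum_sdiff _ _ _
  rw [Finset.inter_comm] at hs₂
  have hD : (∑ i ∈ D₁, 2^(n - 1 - (i:ℕ)) : ℕ) < ∑ i ∈ D₂, 2^(n - 1 - (i:ℕ)) := by omega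
  have hw₁ : (∑ i ∈ C₁ ∩ C₂, w i) + ∑ i ∈ D₁, w i = ∑ i ∈ C₁, w i :=
    Finset.sum_inter_add_sum_sdiff _ _ _
  have hw₂ : (∑ i ∈ C₂ ∩ C₁, w i) + ∑ i ∈ D₂, w i = ∑ i ∈ C₂, w i :=
    Finset.sum_inter_add_sum_sdiff _ _ _
  rw [Finset.inter_comm] at hw₂
  have hne' : (D₁ ∪ D₂).Nonempty := by
    rw [Finset.nonempty_iff_ne_empty]
    intro hemp
    rw [Finset.union_eq_empty] at hemp
    rw [hemp.1, hemp.2] at hD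
    simp at hD
  set i := (D₁ ∪ D₂).min' hne' with hi
  have himem := (D₁ ∪ D₂).min'_mem hne'
  rw [Finset.mem_union] at himem
  rcases himem with hm | hm
  · -- i ∈ D₁ : contradiction with hD
    exfalso
    have hni : i ∉ D₂ := by
      intro hc
      have : i ∈ C₂ := (Finset.mem_sdiff.mp hc).1
      exact (Finset.mem_sdiff.mp hm).2 this
    have hlt : ∀ j ∈ D₂, i < j := by
      intro j hj
      have := Finset.min'_le (D₁ ∪ D₂) j (Finset.mem_union_right _ hj)
      rcases lt_or_eq_of_le this with h' | h'
      · exact h'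
      · rw [← h'] at hj; exact absurd hj hni
    have := beta_lt' i D₂ hlt
    have hle : (2^(n - 1 - (i:ℕ)) : ℕ) ≤ ∑ j ∈ D₁, 2^(n - 1 - (j:ℕ)) :=
      Finset.single_le_sum (f := fun j : Fin n => (2:ℕ)^(n - 1 - (j:ℕ))) (fun j _ => Nat.zero_le _) hm
    omega
  · have hni : i ∉ D₁ := by
      intro hc
      have : i ∈ C₁ := (Finset.mem_sdiff.mp hc).1
      exact (Finset.mem_sdiff.mp hm).2 this
    have hlt : ∀ j ∈ D₁, i < j := by
      intro j hj
      have := Finset.min'_le (D₁ ∪ D₂) j (Finset.mem_union_left _ hj)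
      rcases lt_or_eq_of_le this with h' | h'
      · exact h'
      · rw [← h'] at hj; exact absurd hj hni
    have h1 : (∑ j ∈ D₁, w j) ≤ ∑ j ∈ Finset.univ.filter (fun j => i < j), w j := by
      apply Finset.sum_le_sum_of_subset_of_nonneg
      · intro j hj
        simp only [Finset.mem_filter, Finset.mem_univ, true_and]
        exact hlt j hj
      · exact fun j _ _ => (hpos j).le
    have h2 : w i ≤ ∑ j ∈ D₂, w j :=
      Finset.single_le_sum (fun j _ => (hpos j).le) hm
    have := hsi i
    linarith

/-- Lemma: for a super-increasing sequence (strictly decreasing, positive),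
`β(C₁) < β(C₂)` iff `w(C₁) < w(C₂)`, where `β(C) = ∑_{i ∈ C} 2^(n-i)`
(agent `i : Fin n` corresponds to the paper's agent `i+1`). -/
theorem stmt3 (n : ℕ) (w : Fin n → ℝ) (hpos : ∀ i, 0 < w i) (hdec : StrictAnti w)
    (hsi : ∀ i : Fin n, (∑ j ∈ Finset.univ.filter (fun j => i < j), w j) < w i)
    (C₁ C₂ : Finset (Fin n)) :
    (∑ i ∈ C₁, 2^(n - 1 - (i:ℕ)) : ℕ) < (∑ i ∈ C₂, 2^(n - 1 - (i:ℕ)))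
      ↔ (∑ i ∈ C₁, w i) < ∑ i ∈ C₂, w i := by
  constructor
  · exact key' w hpos hsi C₁ C₂
  · intro hw
    rcases lt_trichotomy (∑ i ∈ C₁, 2^(n - 1 - (i:ℕ)) : ℕ) (∑ i ∈ C₂, 2^(n - 1 - (i:ℕ))) with
      h | h | h
    · exact h
    · exact absurd (beta_inj' C₁ C₂ h ▸ hw) (lt_irrefl _)
    · exact absurd (key' w hpos hsi C₂ C₁ h) (not_lt.mpr hw.le)
end

section
/- Let w₁ > ⋯ > wₙ > 0 be a super-increasing sequence with wᵢ > Σ_{j>i} wⱼ. For every quota q ∈ (0, w({1,…,n})], there exists a unique non-empty subset P ⊆ {1,…,n} such that q ∈ (w(P⁻), w(P)], where P⁻ is the unique subset with β(P⁻) = β(P) − 1 and β(C) = Σ_{i∈C} 2^{n−i}. Consequently the intervals (w(P⁻), w(P)], ranging over non-empty P, partition (0, w(N)]. -/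
open Finset

section aux
variable {n : ℕ}

private def bval (n : ℕ) (P : Finset (Fin n)) : ℕ := ∑ i ∈ P, 2^(n - 1 - (i:ℕ))

private lemma sub_inj {i j : Fin n} (h : n - 1 - (i:ℕ) = n - 1 - (j:ℕ)) : i = j := by
  have hi := i.2; have hj := j.2
  exact Fin.ext (by omega)

private lemma bval_lt (P : Finset (Fin n)) : bval n P < 2^n := by
  have : bval n P = ∑ k ∈ P.image (fun i : Fin n => n - 1 - (i:ℕ)), 2^k := by
    rw [Finset.sum_image (fun a _ b _ h => sub_inj h)]
    rfl
  rw [this]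
  apply Nat.geomSum_lt le_rfl
  intro k hk
  simp only [Finset.mem_image] at hk
  obtain ⟨i, _, rfl⟩ := hk
  have := i.2; omega

/-- generic superincreasing comparison over ℝ -/
private lemma keyR (f : Fin n → ℝ) (hpos : ∀ j, 0 < f j)
    (hsi : ∀ i : Fin n, (∑ j ∈ Finset.univ.filter (fun j => i < j), f j) < f i)
    (P Q : Finset (Fin n)) (i : Fin n) (hiP : i ∈ P) (hiQ : i ∉ Q)
    (hag : ∀ j, j < i → (j ∈ P ↔ j ∈ Q)) :
    ∑ j ∈ Q, f j < ∑ j ∈ P, f j := by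
  have splitP := (Finset.sum_filter_add_sum_filter_not P (fun j => j < i) f).symm
  have splitQ := (Finset.sum_filter_add_sum_filter_not Q (fun j => j < i) f).symm
  have h1 : P.filter (fun j => j < i) = Q.filter (fun j => j < i) := by
    ext j; simp only [Finset.mem_filter]
    constructor
    · rintro ⟨h, hj⟩; exact ⟨(hag j hj).mp h, hj⟩
    · rintro ⟨h, hj⟩; exact ⟨(hag j hj).mpr h, hj⟩
  have hQ2 : ∑ j ∈ Q.filter (fun j => ¬ j < i), f j
      ≤ ∑ j ∈ Finset.univ.filter (fun j => i < j), f j := by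
    apply Finset.sum_le_sum_of_subset_of_nonneg
    · intro j hj
      simp only [Finset.mem_filter, Finset.mem_univ, true_and] at *
      rcases hj with ⟨hjQ, hj⟩
      rcases lt_or_eq_of_le (not_lt.mp hj) with h | h
      · exact h
      · exact absurd (h ▸ hjQ) hiQ
    · intro j _ _; exact (hpos j).le
  have hP2 : f i ≤ ∑ j ∈ P.filter (fun j => ¬ j < i), f j := by
    apply Finset.single_le_sum (f := f) (fun j _ => (hpos j).le)
    simp [hiP]
  have := hsi i
  rw [splitP, splitQ, h1]
  linarith

private lemma pow_si (i : Fin n) :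
    (∑ j ∈ Finset.univ.filter (fun j => i < j), ((2:ℝ))^(n - 1 - (j:ℕ))) < 2^(n - 1 - (i:ℕ)) := by
  have hnat : (∑ j ∈ Finset.univ.filter (fun j : Fin n => i < j), (2:ℕ)^(n - 1 - (j:ℕ)))
      < 2^(n - 1 - (i:ℕ)) := by
    rw [show (∑ j ∈ Finset.univ.filter (fun j : Fin n => i < j), (2:ℕ)^(n - 1 - (j:ℕ)))
        = ∑ k ∈ (Finset.univ.filter (fun j : Fin n => i < j)).image
            (fun j : Fin n => n - 1 - (j:ℕ)), 2^k from
      (Finset.sum_image (fun a _ b _ h => sub_inj h)).symm]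
    apply Nat.geomSum_lt le_rfl
    intro k hk
    simp only [Finset.mem_image, Finset.mem_filter, Finset.mem_univ, true_and] at hk
    obtain ⟨j, hij, rfl⟩ := hk
    have := j.2
    have : (i:ℕ) < (j:ℕ) := hij
    omega
  calc (∑ j ∈ Finset.univ.filter (fun j : Fin n => i < j), ((2:ℝ))^(n - 1 - (j:ℕ)))
      = ((∑ j ∈ Finset.univ.filter (fun j : Fin n => i < j), (2:ℕ)^(n - 1 - (j:ℕ)) : ℕ) : ℝ) := by
        push_cast; rfl
    _ < ((2^(n - 1 - (i:ℕ)) : ℕ) : ℝ) := by exact_mod_cast hnat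
    _ = 2^(n - 1 - (i:ℕ)) := by push_cast; rfl

private lemma keyB (P Q : Finset (Fin n)) (i : Fin n) (hiP : i ∈ P) (hiQ : i ∉ Q)
    (hag : ∀ j, j < i → (j ∈ P ↔ j ∈ Q)) : bval n Q < bval n P := by
  have := keyR (fun j : Fin n => ((2:ℝ))^(n - 1 - (j:ℕ))) (fun j => by positivity)
    (fun i => pow_si i) P Q i hiP hiQ hag
  have hc : ∀ R : Finset (Fin n),
      ((bval n R : ℕ) : ℝ) = ∑ j ∈ R, ((2:ℝ))^(n - 1 - (j:ℕ)) := by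
    intro R; unfold bval; push_cast; rfl
  rw [← hc, ← hc] at this
  exact_mod_cast this

private lemma exists_min_diff (P Q : Finset (Fin n)) (h : P ≠ Q) :
    ∃ i : Fin n, ((i ∈ P ∧ i ∉ Q) ∨ (i ∈ Q ∧ i ∉ P)) ∧ ∀ j, j < i → (j ∈ P ↔ j ∈ Q) := by
  have hne : ((P \ Q) ∪ (Q \ P)).Nonempty := by
    rw [Finset.nonempty_iff_ne_empty]
    intro hcon
    apply h
    ext x
    have : x ∉ (P \ Q) ∪ (Q \ P) := by rw [hcon]; exact Finset.notMem_empty x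
    simp only [Finset.mem_union, Finset.mem_sdiff] at this
    tauto
  obtain ⟨i, hi1, hi2⟩ := Finset.exists_min_image _ id hne
  refine ⟨i, ?_, ?_⟩
  · simp only [Finset.mem_union, Finset.mem_sdiff] at hi1; tauto
  · intro j hj
    by_contra hcon
    have hjm : j ∈ (P \ Q) ∪ (Q \ P) := by
      simp only [Finset.mem_union, Finset.mem_sdiff]; tauto
    exact absurd (hi2 j hjm) (by simpa using hj)

private lemma bval_inj (P Q : Finset (Fin n)) (h : bval n P = bval n Q) : P = Q := by
  by_contra hne
  obtain ⟨i, hi, hag⟩ := exists_min_diff P Q hne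
  rcases hi with ⟨h1, h2⟩ | ⟨h1, h2⟩
  · exact absurd h (keyB P Q i h1 h2 hag).ne'
  · exact absurd h (keyB Q P i h1 h2 (fun j hj => (hag j hj).symm)).ne

private lemma wsum_lt_of_bval_lt (w : Fin n → ℝ) (hpos : ∀ i, 0 < w i)
    (hsi : ∀ i : Fin n, (∑ j ∈ Finset.univ.filter (fun j => i < j), w j) < w i)
    (P Q : Finset (Fin n)) (h : bval n P < bval n Q) :
    ∑ i ∈ P, w i < ∑ i ∈ Q, w i := by
  have hne : P ≠ Q := fun hc => by rw [hc] at h; exact lt_irrefl _ h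
  obtain ⟨i, hi, hag⟩ := exists_min_diff P Q hne
  rcases hi with ⟨h1, h2⟩ | ⟨h1, h2⟩
  · exact absurd (keyB P Q i h1 h2 hag) (by omega)
  · exact keyR w hpos hsi Q P i h1 h2 (fun j hj => (hag j hj).symm)

private lemma wsum_le_of_bval_le (w : Fin n → ℝ) (hpos : ∀ i, 0 < w i)
    (hsi : ∀ i : Fin n, (∑ j ∈ Finset.univ.filter (fun j => i < j), w j) < w i)
    (P Q : Finset (Fin n)) (h : bval n P ≤ bval n Q) :
    ∑ i ∈ P, w i ≤ ∑ i ∈ Q, w i := by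
  rcases lt_or_eq_of_le h with h | h
  · exact (wsum_lt_of_bval_lt w hpos hsi P Q h).le
  · rw [bval_inj P Q h]

private def rev (n : ℕ) : Fin n → Fin n := fun i => ⟨n - 1 - (i:ℕ), by have := i.2; omega⟩

private lemma rev_inv : Function.Involutive (rev n) := by
  intro i
  have := i.2
  exact Fin.ext (by simp [rev]; omega)

private lemma bval_surj (k : ℕ) (hk : k < 2^n) : ∃ C : Finset (Fin n), bval n C = k := by
  let f : Fin n → Fin 2 := finFunctionFinEquiv.symm (⟨k, hk⟩ : Fin (2^n))
  refine ⟨Finset.univ.filter (fun i : Fin n => f (rev n i) = 1), ?_⟩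
  have hksum : (∑ j : Fin n, (f j : ℕ) * 2^(j:ℕ)) = k := by
    have h1 : ((finFunctionFinEquiv f : Fin (2^n)) : ℕ) = ∑ j : Fin n, (f j : ℕ) * 2^(j:ℕ) :=
      finFunctionFinEquiv_apply f
    have h2 : finFunctionFinEquiv f = (⟨k, hk⟩ : Fin (2^n)) :=
      Equiv.apply_symm_apply _ _
    rw [h2] at h1
    exact h1.symm
  rw [← hksum]
  unfold bval
  rw [Finset.sum_filter]
  refine Fintype.sum_equiv (rev_inv.toPerm (rev n))
    (fun i : Fin n => if f (rev n i) = 1 then 2^(n - 1 - (i:ℕ)) else 0)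
    (fun j : Fin n => (f j : ℕ) * 2^(j:ℕ)) ?_
  intro x
  have hx := x.2
  simp only [Function.Involutive.coe_toPerm]
  have hvr : ((rev n x : Fin n) : ℕ) = n - 1 - (x:ℕ) := rfl
  have h2 := (f (rev n x)).2
  rcases (by omega : ((f (rev n x) : ℕ) = 0 ∨ (f (rev n x) : ℕ) = 1)) with h | h
  · have hne : f (rev n x) ≠ 1 := by
      intro hc; rw [hc] at h; simp at h
    simp [hne, hvr, h]
  · have heq : f (rev n x) = 1 := Fin.ext h
    simp [heq, hvr, h]

end aux

/-- For super-increasing weights and any quota `q ∈ (0, w(N)]`, there is a unique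
nonempty subset `P` such that `q ∈ (w(P⁻), w(P)]`, where `P⁻` is the unique subset
with `β(P⁻) = β(P) - 1`. -/
theorem stmt5 (n : ℕ) (w : Fin n → ℝ) (hpos : ∀ i, 0 < w i) (hdec : StrictAnti w)
    (hsi : ∀ i : Fin n, (∑ j ∈ Finset.univ.filter (fun j => i < j), w j) < w i)
    (q : ℝ) (hq1 : 0 < q) (hq2 : q ≤ ∑ i : Fin n, w i) :
    ∃! P : Finset (Fin n), P.Nonempty ∧ ∃ Pm : Finset (Fin n),
      (∑ i ∈ Pm, 2^(n - 1 - (i:ℕ)) : ℕ) + 1 = (∑ i ∈ P, 2^(n - 1 - (i:ℕ))) ∧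
      (∑ i ∈ Pm, w i) < q ∧ q ≤ ∑ i ∈ P, w i := by
  classical
  set T := (Finset.univ : Finset (Finset (Fin n))).filter
    (fun C => q ≤ ∑ i ∈ C, w i) with hT
  have hTne : T.Nonempty := ⟨Finset.univ, by simp [hT, hq2]⟩
  obtain ⟨P, hPT, hmin⟩ := Finset.exists_min_image T (bval n) hTne
  have hPq : q ≤ ∑ i ∈ P, w i := by
    simp only [hT, Finset.mem_filter] at hPT; exact hPT.2
  have hPne : P.Nonempty := by
    rcases Finset.eq_empty_or_nonempty P with h | h
    · exfalso; rw [h] at hPq; simp at hPq; linarith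
    · exact h
  have hb1 : 1 ≤ bval n P := by
    obtain ⟨i, hi⟩ := hPne
    calc 1 ≤ 2^(n - 1 - (i:ℕ)) := Nat.one_le_two_pow
      _ ≤ bval n P := Finset.single_le_sum (f := fun i : Fin n => 2^(n - 1 - (i:ℕ)))
          (fun _ _ => Nat.zero_le _) hi
  have hblt : bval n P < 2^n := bval_lt P
  obtain ⟨Pm, hPm⟩ := bval_surj (n := n) (bval n P - 1) (by omega)
  have hPmlt : ∑ i ∈ Pm, w i < q := by
    by_contra hcon
    push_neg at hcon
    have hmem : Pm ∈ T := by simp [hT, hcon]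
    have := hmin Pm hmem
    omega
  have hPmβ : bval n Pm + 1 = bval n P := by omega
  refine ⟨P, ⟨hPne, Pm, hPmβ, hPmlt, hPq⟩, ?_⟩
  rintro P' ⟨hP'ne, Pm', hβ', hPm'lt, hP'q⟩
  have hβ'' : bval n Pm' + 1 = bval n P' := hβ'
  rcases lt_trichotomy (bval n P') (bval n P) with h | h | h
  · exfalso
    have h1 : bval n P' ≤ bval n Pm := by omega
    have := wsum_le_of_bval_le w hpos hsi P' Pm h1
    linarith
  · exact bval_inj _ _ h
  · exfalso
    have h1 : bval n P ≤ bval n Pm' := by omega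
    have := wsum_le_of_bval_le w hpos hsi P Pm' h1
    linarith
end

section
/- In a weighted voting game, if wᵢ ≤ wⱼ then φᵢ ≤ φⱼ: the Shapley value is monotone in the weights. -/
/-- The Shapley value of agent `i` in the weighted voting game `(w, q)` on `Fin n`. -/
noncomputable def shapley (n : ℕ) (w : Fin n → ℝ) (q : ℝ) (i : Fin n) : ℝ :=
  (∑ σ : Equiv.Perm (Fin n),
      ((if q ≤ ∑ j ∈ insert i (Finset.univ.filter fun j => σ j < σ i), w j then (1:ℝ) else 0)
        - (if q ≤ ∑ j ∈ Finset.univ.filter (fun j => σ j < σ i), w j then (1:ℝ) else 0)))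
    / (Nat.factorial n)

private lemma ind_mono (q a b : ℝ) (h : a ≤ b) :
    (if q ≤ a then (1:ℝ) else 0) ≤ (if q ≤ b then (1:ℝ) else 0) := by
  split_ifs with h1 h2
  · norm_num
  · exact absurd (h1.trans h) h2
  · norm_num
  · norm_num

/-- Monotonicity of the Shapley value in the weights: `wᵢ ≤ wⱼ` implies `φᵢ ≤ φⱼ`. -/
theorem stmt9 (n : ℕ) (w : Fin n → ℝ) (hpos : ∀ i, 0 < w i) (q : ℝ)
    (i j : Fin n) (hw : w i ≤ w j) :
    shapley n w q i ≤ shapley n w q j := by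
  rcases eq_or_ne i j with rfl | hij
  · exact le_refl _
  unfold shapley
  have hfac : (0:ℝ) < (Nat.factorial n : ℝ) := by positivity
  rw [div_le_div_iff_of_pos_right hfac]
  rw [← Equiv.sum_comp (Equiv.mulRight (Equiv.swap i j))
      (fun σ : Equiv.Perm (Fin n) =>
        ((if q ≤ ∑ k ∈ insert i (Finset.univ.filter fun k => σ k < σ i), w k then (1:ℝ) else 0)
        - (if q ≤ ∑ k ∈ Finset.univ.filter (fun k => σ k < σ i), w k then (1:ℝ) else 0)))]
  apply Finset.sum_le_sum
  intro σ _
  simp only [Equiv.coe_mulRight, Equiv.Perm.mul_apply, Equiv.swap_apply_left]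
  set S : Finset (Fin n) := Finset.univ.filter (fun k => σ k < σ j) with hS
  set A : Finset (Fin n) := Finset.univ.filter (fun k => σ (Equiv.swap i j k) < σ j) with hA
  have hjS : j ∉ S := by simp [hS]
  by_cases h : σ i < σ j
  · have hiS : i ∈ S := by simp [hS, h]
    have hAe : A = (insert j S).erase i := by
      ext k
      by_cases hki : k = i
      · subst hki; simp [hA, Equiv.swap_apply_left]
      by_cases hkj : k = j
      · subst hkj; simp [hA, hS, Equiv.swap_apply_right, h, hki]
      · simp [hA, hS, Equiv.swap_apply_of_ne_of_ne hki hkj, hki, hkj]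
    have h1 : insert i A = insert j S := by
      rw [hAe, Finset.insert_erase (Finset.mem_insert_of_mem hiS)]
    have h2 : (∑ k ∈ A, w k) = (∑ k ∈ insert j S, w k) - w i := by
      rw [hAe, eq_sub_iff_add_eq, Finset.sum_erase_add _ _ (Finset.mem_insert_of_mem hiS)]
    rw [h1, h2]
    have h3 : (∑ k ∈ S, w k) ≤ (∑ k ∈ insert j S, w k) - w i := by
      rw [Finset.sum_insert hjS]; linarith
    have := ind_mono q _ _ h3
    linarith
  · have hiS : i ∉ S := by simp [hS, h]
    have hAe : A = S := by
      ext k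
      by_cases hki : k = i
      · subst hki; simp [hA, hS, Equiv.swap_apply_left, h]
      by_cases hkj : k = j
      · subst hkj; simp [hA, hS, Equiv.swap_apply_right, h]
      · simp [hA, hS, Equiv.swap_apply_of_ne_of_ne hki hkj]
    rw [hAe]
    have h3 : (∑ k ∈ insert i S, w k) ≤ (∑ k ∈ insert j S, w k) := by
      rw [Finset.sum_insert hiS, Finset.sum_insert hjS]; linarith
    have := ind_mono q _ _ h3
    linarith
end

section
/- In a weighted voting game with n agents, for any two agents i, j with wᵢ ≤ wⱼ, the difference of Shapley values satisfies φⱼ − φᵢ = (1/(n−1)) Σ_{ℓ=0}^{n−2} Pr_{S}[q − wⱼ ≤ w(S) < q − wᵢ], where S is uniformly random among ℓ-element subsets of N \ {i,j}. -/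
section ShapleyAux
open Finset Equiv

lemma pos_count {n : ℕ} (σ : Equiv.Perm (Fin n)) (i : Fin n) :
    (Finset.univ.filter fun k => σ k < σ i).card = (σ i : ℕ) := by
  have : (Finset.univ.filter fun k => σ k < σ i) = (Finset.Iio (σ i)).image σ.symm := by
    ext k
    simp only [mem_filter, mem_univ, true_and, mem_image, mem_Iio]
    constructor
    · intro h; exact ⟨σ k, h, σ.symm_apply_apply k⟩
    · rintro ⟨y, hy, rfl⟩; simpa using hy
  rw [this, Finset.card_image_of_injective _ σ.symm.injective, Fin.card_Iio]

lemma count_fiber {n : ℕ} (i : Fin n) (S : Finset (Fin n)) (hi : i ∉ S) :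
    (Finset.univ.filter
        (fun σ : Equiv.Perm (Fin n) => Finset.univ.filter (fun k => σ k < σ i) = S)).card
      = Nat.factorial S.card * Nat.factorial (n - 1 - S.card) := by
  classical
  have hn : 0 < n := i.pos
  have hl : S.card < n := by
    have hsub : S ⊆ Finset.univ.erase i := fun x hx => by
      rw [Finset.mem_erase]
      exact ⟨fun h => hi (h ▸ hx), Finset.mem_univ x⟩
    calc S.card ≤ (Finset.univ.erase i).card := Finset.card_le_card hsub
    _ = n - 1 := by simp
    _ < n := by omega
  set l := S.card with hlcard
  set m : Fin n := ⟨l, hl⟩ with hm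
  set C : Finset (Fin n) := Finset.univ \ insert i S with hC
  have hcardC : C.card = n - 1 - l := by
    rw [hC, Finset.card_sdiff_of_subset (Finset.subset_univ _), Finset.card_insert_of_notMem hi]
    simp; omega
  -- fiber as subtype
  rw [← Fintype.card_subtype]
  -- properties of fiber elements
  have key : ∀ σ : Equiv.Perm (Fin n),
      (Finset.univ.filter (fun k => σ k < σ i) = S) →
      σ i = m ∧ (∀ x ∈ S, σ x < m) ∧ (∀ x ∈ C, m < σ x) := by
    intro σ hσ
    have hσi : σ i = m := by
      have := pos_count σ i
      rw [hσ] at this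
      exact Fin.ext this.symm
    refine ⟨hσi, fun x hx => ?_, fun x hx => ?_⟩
    · rw [← hσi]
      rw [← hσ] at hx
      exact (Finset.mem_filter.mp hx).2
    · rw [hC, Finset.mem_sdiff, Finset.mem_insert] at hx
      push_neg at hx
      obtain ⟨-, hxi, hxS⟩ := hx
      have h1 : ¬ σ x < σ i := by
        intro h; exact hxS (by rw [← hσ]; exact Finset.mem_filter.mpr ⟨Finset.mem_univ x, h⟩)
      have h2 : σ x ≠ σ i := fun h => hxi (σ.injective h)
      rw [← hσi]; omega
  have hfacts : ∀ x : Fin n, (x ∈ S) ∨ (x = i) ∨ (x ∈ C) := by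
    intro x
    by_cases h1 : x ∈ S
    · exact Or.inl h1
    by_cases h2 : x = i
    · exact Or.inr (Or.inl h2)
    · exact Or.inr (Or.inr (by
        rw [hC, Finset.mem_sdiff, Finset.mem_insert]
        push_neg
        exact ⟨Finset.mem_univ x, h2, h1⟩))
  have card1 : Fintype.card ↥S = Fintype.card ↥(Finset.Iio m) := by
    rw [Fintype.card_coe, Fintype.card_coe, Fin.card_Iio]
  have card2 : Fintype.card ↥C = Fintype.card ↥(Finset.Ioi m) := by
    rw [Fintype.card_coe, Fintype.card_coe, Fin.card_Ioi, hcardC]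
  let F : {σ : Equiv.Perm (Fin n) // Finset.univ.filter (fun k => σ k < σ i) = S}
      → ((↥S ≃ ↥(Finset.Iio m)) × (↥C ≃ ↥(Finset.Ioi m))) := fun σp =>
    ⟨Equiv.ofBijective
        (fun x : ↥S => (⟨σp.1 x, Finset.mem_Iio.mpr ((key σp.1 σp.2).2.1 x x.2)⟩ :
          ↥(Finset.Iio m)))
        ((Fintype.bijective_iff_injective_and_card _).mpr
          ⟨fun a b hab => Subtype.ext (σp.1.injective (congrArg Subtype.val hab)), card1⟩),
     Equiv.ofBijective
        (fun x : ↥C => (⟨σp.1 x, Finset.mem_Ioi.mpr ((key σp.1 σp.2).2.2 x x.2)⟩ :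
          ↥(Finset.Ioi m)))
        ((Fintype.bijective_iff_injective_and_card _).mpr
          ⟨fun a b hab => Subtype.ext (σp.1.injective (congrArg Subtype.val hab)), card2⟩)⟩
  have hFinj : Function.Injective F := by
    intro σ1 σ2 h
    have h1 : ∀ y : ↥S, ((F σ1).1 y : Fin n) = ((F σ2).1 y : Fin n) := fun y => by rw [h]
    have h2 : ∀ y : ↥C, ((F σ1).2 y : Fin n) = ((F σ2).2 y : Fin n) := fun y => by rw [h]
    apply Subtype.ext; apply Equiv.ext; intro x
    rcases hfacts x with hx | hx | hx
    · have := h1 ⟨x, hx⟩; simpa only [F, Equiv.ofBijective, Equiv.coe_fn_mk] using this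
    · subst hx
      rw [(key σ1.1 σ1.2).1, (key σ2.1 σ2.2).1]
    · have := h2 ⟨x, hx⟩; simpa only [F, Equiv.ofBijective, Equiv.coe_fn_mk] using this
  have hFsurj : Function.Surjective F := by
    rintro ⟨e₁, e₂⟩
    have hiC : i ∉ C := by simp [hC]
    set g : Fin n → Fin n := fun x =>
      if hx : x ∈ S then (e₁ ⟨x, hx⟩ : Fin n)
      else if hxi : x = i then m
      else (e₂ ⟨x, by
        rw [hC, Finset.mem_sdiff, Finset.mem_insert]
        push_neg
        exact ⟨Finset.mem_univ x, hxi, hx⟩⟩ : Fin n) with hg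
    have hgS : ∀ x (hx : x ∈ S), g x = (e₁ ⟨x, hx⟩ : Fin n) := by
      intro x hx; simp [hg, hx]
    have hgi : g i = m := by simp [hg, hi]
    have hgC : ∀ x (hx : x ∈ C), g x = (e₂ ⟨x, hx⟩ : Fin n) := by
      intro x hx
      have h2 : x ≠ i := fun h => hiC (h ▸ hx)
      have h1 : x ∉ S := by
        rw [hC, Finset.mem_sdiff, Finset.mem_insert] at hx
        push_neg at hx; exact hx.2.2
      simp [hg, h1, h2]
    have hgSlt : ∀ x, x ∈ S → g x < m := by
      intro x hx; rw [hgS x hx]; exact Finset.mem_Iio.mp (e₁ ⟨x, hx⟩).2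
    have hgCgt : ∀ x, x ∈ C → m < g x := by
      intro x hx; rw [hgC x hx]; exact Finset.mem_Ioi.mp (e₂ ⟨x, hx⟩).2
    have hginj : Function.Injective g := by
      intro a b hab
      rcases hfacts a with ha | ha | ha <;> rcases hfacts b with hb | hb | hb
      · have := congrArg Subtype.val (e₁.injective (a₁ := ⟨a, ha⟩) (a₂ := ⟨b, hb⟩)
          (Subtype.ext (by rw [← hgS a ha, ← hgS b hb, hab])))
        exact this
      · exfalso; have h1 := hgSlt a ha; rw [hab, hb, hgi] at h1; exact lt_irrefl m h1
      · exfalso; have h1 := hgSlt a ha; rw [hab] at h1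
        exact absurd h1 (not_lt.mpr (hgCgt b hb).le)
      · exfalso; have h1 := hgSlt b hb; rw [← hab, ha, hgi] at h1; exact lt_irrefl m h1
      · rw [ha, hb]
      · exfalso; have h1 := hgCgt b hb; rw [← hab, ha, hgi] at h1; exact lt_irrefl m h1
      · exfalso; have h1 := hgCgt a ha; rw [hab] at h1
        exact absurd h1 (not_lt.mpr (hgSlt b hb).le)
      · exfalso; have h1 := hgCgt a ha; rw [hab, hb, hgi] at h1; exact lt_irrefl m h1
      · have := congrArg Subtype.val (e₂.injective (a₁ := ⟨a, ha⟩) (a₂ := ⟨b, hb⟩)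
          (Subtype.ext (by rw [← hgC a ha, ← hgC b hb, hab])))
        exact this
    let σ : Equiv.Perm (Fin n) := Equiv.ofBijective g
      ((Fintype.bijective_iff_injective_and_card g).mpr ⟨hginj, rfl⟩)
    have hσapp : ∀ x, σ x = g x := fun x => rfl
    have hfib : Finset.univ.filter (fun k => σ k < σ i) = S := by
      ext k
      simp only [Finset.mem_filter, Finset.mem_univ, true_and]
      rw [hσapp, hσapp, hgi]
      constructor
      · intro hk
        rcases hfacts k with h | h | h
        · exact h
        · exact absurd (h ▸ hk) (by rw [hgi]; exact lt_irrefl m)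
        · exact absurd hk (not_lt.mpr (le_of_lt (hgCgt k h)))
      · intro hk; exact hgSlt k hk
    refine ⟨⟨σ, hfib⟩, Prod.ext ?_ ?_⟩
    · apply Equiv.ext; intro x; apply Subtype.ext
      show σ (x : Fin n) = (e₁ x : Fin n)
      rw [hσapp, hgS x x.2]
    · apply Equiv.ext; intro x; apply Subtype.ext
      show σ (x : Fin n) = (e₂ x : Fin n)
      rw [hσapp, hgC x x.2]
  rw [Fintype.card_congr (Equiv.ofBijective F ⟨hFinj, hFsurj⟩), Fintype.card_prod,
    Fintype.card_equiv (Fintype.equivOfCardEq card1),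
    Fintype.card_equiv (Fintype.equivOfCardEq card2)]
  rw [Fintype.card_coe, Fintype.card_coe, hcardC]


lemma ind4 (q t wi wj : ℝ) (h : wi ≤ wj) :
    ((if q ≤ wj + (t + wi) then (1:ℝ) else 0) - (if q ≤ t + wi then (1:ℝ) else 0))
      - ((if q ≤ wi + (t + wj) then (1:ℝ) else 0) - (if q ≤ t + wj then (1:ℝ) else 0))
      = if q - wj ≤ t ∧ t < q - wi then 1 else 0 := by
  rw [show wj + (t + wi) = wi + (t + wj) by ring]
  rw [show ∀ A B C : ℝ, (A - B) - (A - C) = C - B from fun _ _ _ => by ring]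
  by_cases h2 : q ≤ t + wi
  · have h4 : q ≤ t + wj := by linarith
    rw [if_pos h4, if_pos h2, if_neg (by rintro ⟨hc1, hc2⟩; linarith)]
    norm_num
  · by_cases h4 : q ≤ t + wj
    · rw [if_pos h4, if_neg h2, if_pos ⟨by linarith, by linarith⟩]
      norm_num
    · rw [if_neg h4, if_neg h2, if_neg (by rintro ⟨hc1, hc2⟩; linarith)]
      norm_num

lemma ind2 (q t wi wj : ℝ) (h : wi ≤ wj) :
    ((if q ≤ wj + t then (1:ℝ) else 0) - (if q ≤ t then (1:ℝ) else 0))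
      - ((if q ≤ wi + t then (1:ℝ) else 0) - (if q ≤ t then (1:ℝ) else 0))
      = if q - wj ≤ t ∧ t < q - wi then 1 else 0 := by
  rw [show ∀ A B C : ℝ, (A - B) - (C - B) = A - C from fun _ _ _ => by ring]
  by_cases h2 : q ≤ wi + t
  · have h4 : q ≤ wj + t := by linarith
    rw [if_pos h4, if_pos h2, if_neg (by rintro ⟨hc1, hc2⟩; linarith)]
    norm_num
  · by_cases h4 : q ≤ wj + t
    · rw [if_pos h4, if_neg h2, if_pos ⟨by linarith, by linarith⟩]
      norm_num
    · rw [if_neg h4, if_neg h2, if_neg (by rintro ⟨hc1, hc2⟩; linarith)]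
      norm_num

lemma pointwise {n : ℕ} (w : Fin n → ℝ) (q : ℝ) (i j : Fin n) (hij : i ≠ j) (hw : w i ≤ w j)
    (σ : Equiv.Perm (Fin n)) :
    ((if q ≤ ∑ k ∈ insert j (Finset.univ.filter fun k =>
          (σ * Equiv.swap i j) k < (σ * Equiv.swap i j) j), w k then (1:ℝ) else 0)
        - (if q ≤ ∑ k ∈ Finset.univ.filter (fun k =>
          (σ * Equiv.swap i j) k < (σ * Equiv.swap i j) j), w k then (1:ℝ) else 0))
      - ((if q ≤ ∑ k ∈ insert i (Finset.univ.filter fun k => σ k < σ i), w k then (1:ℝ) else 0)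
        - (if q ≤ ∑ k ∈ Finset.univ.filter (fun k => σ k < σ i), w k then (1:ℝ) else 0))
      = (if q - w j ≤ ∑ k ∈ (Finset.univ.filter (fun k => σ k < σ i)).erase j, w k
            ∧ (∑ k ∈ (Finset.univ.filter (fun k => σ k < σ i)).erase j, w k) < q - w i
         then (1:ℝ) else 0) := by
  classical
  set A := Finset.univ.filter (fun k => σ k < σ i) with hA
  have hiA : i ∉ A := by simp [hA]
  have himg : Finset.univ.filter (fun k => (σ * Equiv.swap i j) k < (σ * Equiv.swap i j) j)
      = A.image (Equiv.swap i j) := by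
    ext k
    simp only [hA, Finset.mem_filter, Finset.mem_univ, true_and, Finset.mem_image,
      Equiv.Perm.mul_apply, Equiv.swap_apply_right]
    constructor
    · intro hk
      exact ⟨Equiv.swap i j k, hk, Equiv.swap_apply_self i j k⟩
    · rintro ⟨a, ha, rfl⟩
      rwa [Equiv.swap_apply_self]
  have hjimg : j ∉ A.image (Equiv.swap i j) := by
    simp only [Finset.mem_image]
    rintro ⟨a, ha, hae⟩
    have hai : a = i := by
      have h := congrArg (Equiv.swap i j) hae
      rwa [Equiv.swap_apply_self, Equiv.swap_apply_right] at h
    exact hiA (hai ▸ ha)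
  have hsum_img : ∑ k ∈ A.image (Equiv.swap i j), w k = ∑ a ∈ A, w (Equiv.swap i j a) :=
    Finset.sum_image (fun a _ b _ hab => (Equiv.swap i j).injective hab)
  rw [himg, Finset.sum_insert hjimg, Finset.sum_insert hiA, hsum_img]
  by_cases hj : j ∈ A
  · have h1 : ∑ a ∈ A, w (Equiv.swap i j a) = (∑ k ∈ A.erase j, w k) + w i := by
      rw [← Finset.sum_erase_add A _ hj, Equiv.swap_apply_right]
      congr 1
      refine Finset.sum_congr rfl fun a ha => ?_
      rw [Equiv.swap_apply_of_ne_of_ne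
        (fun h : a = i => hiA (h ▸ (Finset.mem_of_mem_erase ha))) (Finset.ne_of_mem_erase ha)]
    have h2 : ∑ k ∈ A, w k = (∑ k ∈ A.erase j, w k) + w j := by
      rw [Finset.sum_erase_add A _ hj]
    rw [h1, h2]
    exact ind4 q _ (w i) (w j) hw
  · have herase : A.erase j = A := Finset.erase_eq_of_notMem hj
    have h1 : ∑ a ∈ A, w (Equiv.swap i j a) = ∑ k ∈ A, w k := by
      refine Finset.sum_congr rfl fun a ha => ?_
      rw [Equiv.swap_apply_of_ne_of_ne (fun h : a = i => hiA (h ▸ ha)) (fun h : a = j => hj (h ▸ ha))]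
    rw [h1, herase]
    exact ind2 q _ (w i) (w j) hw


lemma coefnat (a b : ℕ) :
    (a.factorial * (b+1).factorial + (a+1).factorial * b.factorial) * ((a+b+1) * (a+b).choose a)
      = (a+b+2).factorial := by
  have h : (a+b).choose a * a.factorial * b.factorial = (a+b).factorial := by
    have h0 := Nat.choose_mul_factorial_mul_factorial (Nat.le_add_right a b)
    simpa using h0
  have e1 : (b+1).factorial = (b+1) * b.factorial := Nat.factorial_succ b
  have e2 : (a+1).factorial = (a+1) * a.factorial := Nat.factorial_succ a
  have e3 : (a+b+2).factorial = (a+b+2) * ((a+b+1) * (a+b).factorial) := by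
    rw [show a+b+2 = (a+b+1)+1 by ring, Nat.factorial_succ, Nat.factorial_succ]
  rw [e1, e2, e3, ← h]
  ring

end ShapleyAux



/-- The difference formula: for `wᵢ ≤ wⱼ`,
`φⱼ - φᵢ = (1/(n-1)) ∑_{ℓ=0}^{n-2} Pr_{S ∈ ([N\{i,j}] choose ℓ)}[q - wⱼ ≤ w(S) < q - wᵢ]`. -/
theorem stmt10 (n : ℕ) (w : Fin n → ℝ) (hpos : ∀ i, 0 < w i) (q : ℝ)
    (i j : Fin n) (hij : i ≠ j) (hw : w i ≤ w j) :
    shapley n w q j - shapley n w q i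
      = (1/((n:ℝ)-1)) * ∑ l ∈ Finset.range (n-1),
          (((Finset.univ \ {i, j}).powersetCard l).card : ℝ)⁻¹ *
            ∑ S ∈ (Finset.univ \ {i, j}).powersetCard l,
              (if q - w j ≤ ∑ k ∈ S, w k ∧ (∑ k ∈ S, w k) < q - w i
               then (1:ℝ) else 0) := by
  classical
  have hn2 : 2 ≤ n := by
    have hnt : Nontrivial (Fin n) := ⟨⟨i, j, hij⟩⟩
    exact (by simpa using Fintype.one_lt_card (α := Fin n) : 1 < n)
  set D : Finset (Fin n) := Finset.univ \ {i, j} with hD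
  have hcardD : D.card = n - 2 := by
    rw [hD, Finset.card_sdiff_of_subset (Finset.subset_univ _)]
    rw [Finset.card_insert_of_notMem (by simp [hij]), Finset.card_singleton]
    simp
  set B : Equiv.Perm (Fin n) → Finset (Fin n) :=
    fun σ => (Finset.univ.filter (fun k => σ k < σ i)).erase j with hB
  set ind : Finset (Fin n) → ℝ :=
    fun S => if q - w j ≤ ∑ k ∈ S, w k ∧ (∑ k ∈ S, w k) < q - w i then (1:ℝ) else 0 with hind
  -- Step 1
  have step1 : shapley n w q j - shapley n w q i
      = (∑ σ : Equiv.Perm (Fin n), ind (B σ)) / (Nat.factorial n) := by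
    unfold shapley
    rw [div_sub_div_same]
    congr 1
    rw [← Equiv.sum_comp (Equiv.mulRight (Equiv.swap i j))
      (fun σ : Equiv.Perm (Fin n) =>
        ((if q ≤ ∑ k ∈ insert j (Finset.univ.filter fun k => σ k < σ j), w k then (1:ℝ) else 0)
          - (if q ≤ ∑ k ∈ Finset.univ.filter (fun k => σ k < σ j), w k then (1:ℝ) else 0)))]
    rw [← Finset.sum_sub_distrib]
    refine Finset.sum_congr rfl fun σ _ => ?_
    have hp := pointwise w q i j hij hw σ
    simp only [hB, hind, Equiv.coe_mulRight] at hp ⊢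
    convert hp <;> congr
  -- Step 2: fiberwise grouping
  have hmaps : ∀ σ ∈ (Finset.univ : Finset (Equiv.Perm (Fin n))), B σ ∈ D.powerset := by
    intro σ _
    rw [Finset.mem_powerset]
    intro k hk
    rw [hB] at hk
    have hkj : k ≠ j := Finset.ne_of_mem_erase hk
    have hk' := Finset.mem_of_mem_erase hk
    rw [Finset.mem_filter] at hk'
    have hki : k ≠ i := by
      intro h; rw [h] at hk'; exact lt_irrefl _ hk'.2
    rw [hD, Finset.mem_sdiff, Finset.mem_insert, Finset.mem_singleton]
    push_neg
    exact ⟨Finset.mem_univ k, hki, hkj⟩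
  have step2 : (∑ σ : Equiv.Perm (Fin n), ind (B σ))
      = ∑ S ∈ D.powerset,
          ((Nat.factorial S.card * Nat.factorial (n - 1 - S.card)
            + Nat.factorial (S.card + 1) * Nat.factorial (n - 2 - S.card) : ℕ) : ℝ) * ind S := by
    rw [← Finset.sum_fiberwise_of_maps_to hmaps (fun σ => ind (B σ))]
    refine Finset.sum_congr rfl fun S hS => ?_
    have hSD : S ⊆ D := Finset.mem_powerset.mp hS
    have hiS : i ∉ S := fun h => by
      have := hSD h; rw [hD, Finset.mem_sdiff] at this; exact this.2 (by simp)
    have hjS : j ∉ S := fun h => by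
      have := hSD h; rw [hD, Finset.mem_sdiff] at this; exact this.2 (by simp)
    have hinner : ∑ σ ∈ Finset.univ.filter (fun σ => B σ = S), ind (B σ)
        = (Finset.univ.filter (fun σ => B σ = S)).card • ind S := by
      rw [Finset.sum_congr rfl (fun σ hσ => by rw [(Finset.mem_filter.mp hσ).2]),
        Finset.sum_const]
    rw [hinner, nsmul_eq_mul]
    congr 1
    -- count the fiber
    have hsplit : Finset.univ.filter (fun σ : Equiv.Perm (Fin n) => B σ = S)
        = Finset.univ.filter
            (fun σ : Equiv.Perm (Fin n) => Finset.univ.filter (fun k => σ k < σ i) = S)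
          ∪ Finset.univ.filter
            (fun σ : Equiv.Perm (Fin n) =>
              Finset.univ.filter (fun k => σ k < σ i) = insert j S) := by
      ext σ
      simp only [Finset.mem_filter, Finset.mem_univ, true_and, Finset.mem_union, hB]
      constructor
      · intro h
        by_cases hjP : j ∈ Finset.univ.filter (fun k => σ k < σ i)
        · right; rw [← h, Finset.insert_erase hjP]
        · left; rw [← h, Finset.erase_eq_of_notMem hjP]
      · rintro (h | h)
        · rw [h, Finset.erase_eq_of_notMem hjS]
        · rw [h, Finset.erase_insert hjS]
    have hdisj : Disjoint
        (Finset.univ.filter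
          (fun σ : Equiv.Perm (Fin n) => Finset.univ.filter (fun k => σ k < σ i) = S))
        (Finset.univ.filter
          (fun σ : Equiv.Perm (Fin n) =>
            Finset.univ.filter (fun k => σ k < σ i) = insert j S)) := by
      rw [Finset.disjoint_left]
      intro σ h1 h2
      rw [Finset.mem_filter] at h1 h2
      have : S = insert j S := h1.2 ▸ h2.2
      exact hjS (this ▸ Finset.mem_insert_self j S)
    have hijS : i ∉ insert j S := by
      rw [Finset.mem_insert]; push_neg; exact ⟨hij, hiS⟩
    rw [hsplit, Finset.card_union_of_disjoint hdisj, count_fiber i S hiS,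
      count_fiber i (insert j S) hijS, Finset.card_insert_of_notMem hjS]
    have heq : n - 1 - (S.card + 1) = n - 2 - S.card := by omega
    rw [heq]
  -- Step 3
  rw [step1, step2, Finset.sum_powerset, hcardD]
  have hrange : n - 2 + 1 = n - 1 := by omega
  rw [hrange, Finset.sum_div, Finset.mul_sum]
  refine Finset.sum_congr rfl fun l hl => ?_
  have hl' : l ≤ n - 2 := by
    rw [Finset.mem_range] at hl; omega
  -- all sets in powersetCard l have card l
  have hcards : ∑ S ∈ D.powersetCard l,
      ((Nat.factorial S.card * Nat.factorial (n - 1 - S.card)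
        + Nat.factorial (S.card + 1) * Nat.factorial (n - 2 - S.card) : ℕ) : ℝ) * ind S
      = ((Nat.factorial l * Nat.factorial (n - 1 - l)
        + Nat.factorial (l + 1) * Nat.factorial (n - 2 - l) : ℕ) : ℝ)
          * ∑ S ∈ D.powersetCard l, ind S := by
    rw [Finset.mul_sum]
    refine Finset.sum_congr rfl fun S hS => ?_
    rw [(Finset.mem_powersetCard.mp hS).2]
  rw [hcards]
  have hcardP : ((D.powersetCard l).card : ℝ) = ((n-2).choose l : ℕ) := by
    rw [Finset.card_powersetCard, hcardD]
  rw [hcardP]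
  -- coefficient identity
  obtain ⟨b, hbn⟩ : ∃ b, n = l + b + 2 := ⟨n - 2 - l, by omega⟩
  have e1 : n - 2 = l + b := by omega
  have e2 : n - 1 - l = b + 1 := by omega
  have e3 : n - 2 - l = b := by omega
  have e4 : (n : ℝ) = ((l + b + 2 : ℕ) : ℝ) := by rw [← hbn]
  have e5 : Nat.factorial n = Nat.factorial (l + b + 2) := by rw [hbn]
  rw [e2, e3, e5, e1, e4]
  have hchpos : (0:ℝ) < ((l + b).choose l : ℕ) := by
    exact_mod_cast Nat.choose_pos (Nat.le_add_right l b)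
  have hfacpos : (0:ℝ) < (Nat.factorial (l + b + 2) : ℕ) := by
    exact_mod_cast Nat.factorial_pos _
  have hkey : ((Nat.factorial l * Nat.factorial (b+1)
        + Nat.factorial (l+1) * Nat.factorial b : ℕ) : ℝ)
        * (((l+b+1 : ℕ) : ℝ) * (((l+b).choose l : ℕ) : ℝ))
      = ((Nat.factorial (l+b+2) : ℕ) : ℝ) := by
    exact_mod_cast coefnat l b
  have hden : ((l + b + 2 : ℕ) : ℝ) - 1 = ((l + b + 1 : ℕ) : ℝ) := by push_cast; ring
  rw [hden]
  have h1 : (0:ℝ) < ((l + b + 1 : ℕ) : ℝ) := by positivity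
  field_simp
  push_cast at hkey ⊢
  linear_combination (∑ S ∈ D.powersetCard l, ind S) * hkey
end

section
/- Let w₁ > ⋯ > wₙ > 0 be super-increasing and let q ∈ (0, w(N)] with associated subset A(q) = {a₀ < a₁ < ⋯ < a_r} (the unique P with q ∈ (w(P⁻), w(P)]). Then for each agent i: if i ∉ A(q), the Shapley value is φᵢ(q) = Σ_{t: a_t > i} 1/(a_t · C(a_t − 1, t)); if i = a_s ∈ A(q), then φᵢ(q) = 1/(a_s · C(a_s − 1, s)) − Σ_{t: a_t > i} 1/(a_t · C(a_t − 1, t − 1)). -/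
open Finset

namespace Stmt12

variable {n : ℕ}

/-- binary weight of a subset -/
def beta (X : Finset (Fin n)) : ℕ := ∑ i ∈ X, 2^(n - 1 - (i:ℕ))

/-- colex comparison witness -/
def ltW (X Y : Finset (Fin n)) : Prop :=
  ∃ j, j ∈ Y ∧ j ∉ X ∧ X ∩ Finset.Iio j = Y ∩ Finset.Iio j

theorem sum_lt_of_ltW {g : Fin n → ℝ} (hpos : ∀ i, 0 < g i)
    (hsi : ∀ i : Fin n, (∑ j ∈ Finset.univ.filter (fun j => i < j), g j) < g i)
    {X Y : Finset (Fin n)} (h : ltW X Y) :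
    ∑ x ∈ X, g x < ∑ x ∈ Y, g x := by
  obtain ⟨j, hjY, hjX, hag⟩ := h
  have hX : ∑ x ∈ X ∩ Finset.Iio j, g x + ∑ x ∈ X \ Finset.Iio j, g x = ∑ x ∈ X, g x :=
    Finset.sum_inter_add_sum_sdiff _ _ _
  have hY : ∑ x ∈ Y ∩ Finset.Iio j, g x + ∑ x ∈ Y \ Finset.Iio j, g x = ∑ x ∈ Y, g x :=
    Finset.sum_inter_add_sum_sdiff _ _ _
  have h1 : ∑ x ∈ X \ Finset.Iio j, g x ≤ ∑ x ∈ Finset.univ.filter (fun x => j < x), g x := by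
    apply Finset.sum_le_sum_of_subset_of_nonneg
    · intro x hx
      simp only [Finset.mem_sdiff, Finset.mem_Iio, Finset.mem_filter, Finset.mem_univ,
        true_and] at hx ⊢
      rcases lt_or_eq_of_le (not_lt.mp hx.2) with h | h
      · exact h
      · exact absurd (h ▸ hx.1) hjX
    · intro x _ _; exact (hpos x).le
  have h2 : g j ≤ ∑ x ∈ Y \ Finset.Iio j, g x := by
    apply Finset.single_le_sum (fun x _ => (hpos x).le)
    simp [hjY]
  calc ∑ x ∈ X, g x = ∑ x ∈ X ∩ Finset.Iio j, g x + ∑ x ∈ X \ Finset.Iio j, g x := hX.symm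
    _ < ∑ x ∈ Y ∩ Finset.Iio j, g x + ∑ x ∈ Y \ Finset.Iio j, g x := by
        rw [hag]
        have := hsi j
        linarith
    _ = ∑ x ∈ Y, g x := hY

theorem ltW_or_ltW {X Y : Finset (Fin n)} (h : X ≠ Y) : ltW X Y ∨ ltW Y X := by
  have hne : ((X \ Y) ∪ (Y \ X)).Nonempty := by
    rw [Finset.nonempty_iff_ne_empty]
    intro hc
    apply h
    ext x
    have h1 := Finset.eq_empty_iff_forall_notMem.mp hc x
    simp only [Finset.mem_union, Finset.mem_sdiff] at h1
    constructor <;> intro hx <;> by_contra hy <;> exact h1 (by tauto)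
  set D := (X \ Y) ∪ (Y \ X) with hD
  set j := D.min' hne with hj
  have hjD : j ∈ D := D.min'_mem hne
  have hag : X ∩ Finset.Iio j = Y ∩ Finset.Iio j := by
    ext k
    simp only [Finset.mem_inter, Finset.mem_Iio]
    have : k < j → (k ∈ X ↔ k ∈ Y) := by
      intro hk
      by_contra hc
      have hkD : k ∈ D := by
        simp only [hD, Finset.mem_union, Finset.mem_sdiff]
        tauto
      exact absurd (D.min'_le k hkD) (not_le.mpr hk)
    constructor <;> intro ⟨h1, h2⟩
    · exact ⟨(this h2).mp h1, h2⟩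
    · exact ⟨(this h2).mpr h1, h2⟩
  rw [hD, Finset.mem_union, Finset.mem_sdiff, Finset.mem_sdiff] at hjD
  rcases hjD with ⟨h1, h2⟩ | ⟨h1, h2⟩
  · exact Or.inr ⟨j, h1, h2, hag.symm⟩
  · exact Or.inl ⟨j, h1, h2, hag⟩


def g2 (n : ℕ) : Fin n → ℝ := fun j => (2:ℝ)^(n - 1 - (j:ℕ))

theorem g2_pos : ∀ i : Fin n, 0 < g2 n i := fun i => pow_pos (by norm_num) _

theorem beta_cast (X : Finset (Fin n)) : (beta X : ℝ) = ∑ i ∈ X, g2 n i := by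
  unfold beta g2
  push_cast
  rfl

theorem g2_si (i : Fin n) :
    (∑ j ∈ Finset.univ.filter (fun j => i < j), g2 n j) < g2 n i := by
  have key : (∑ j ∈ Finset.univ.filter (fun j => i < j), 2^(n - 1 - (j:ℕ)) : ℕ)
      < 2^(n - 1 - (i:ℕ)) := by
    have hinj : Set.InjOn (fun j : Fin n => n - 1 - (j:ℕ))
        (Finset.univ.filter (fun j => i < j)) := by
      intro a ha b hb hab
      have ha' : (a:ℕ) < n := a.isLt
      have hb' : (b:ℕ) < n := b.isLt
      simp only at hab
      exact Fin.ext (by omega)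
    rw [← Finset.sum_image hinj]
    have hsub : (Finset.univ.filter (fun j : Fin n => i < j)).image
        (fun j : Fin n => n - 1 - (j:ℕ)) ⊆ Finset.range (n - 1 - (i:ℕ)) := by
      intro k hk
      simp only [Finset.mem_image, Finset.mem_filter, Finset.mem_univ, true_and] at hk
      obtain ⟨j, hj, rfl⟩ := hk
      have : (i:ℕ) < (j:ℕ) := hj
      have := j.isLt
      simp only [Finset.mem_range]
      omega
    calc (∑ k ∈ (Finset.univ.filter (fun j : Fin n => i < j)).image
            (fun j : Fin n => n - 1 - (j:ℕ)), 2^k)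
        ≤ ∑ k ∈ Finset.range (n - 1 - (i:ℕ)), 2^k :=
          Finset.sum_le_sum_of_subset hsub
      _ < 2^(n - 1 - (i:ℕ)) := by
          have : ∀ m : ℕ, ∑ k ∈ Finset.range m, 2^k = 2^m - 1 := by
            intro m
            induction m with
            | zero => simp
            | succ m ih => rw [Finset.sum_range_succ, ih]; have := Nat.one_le_two_pow (n := m); omega
          rw [this]
          have := Nat.one_le_two_pow (n := n - 1 - (i:ℕ))
          omega
  have : ((∑ j ∈ Finset.univ.filter (fun j => i < j), 2^(n - 1 - (j:ℕ)) : ℕ) : ℝ)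
      < ((2^(n - 1 - (i:ℕ)) : ℕ) : ℝ) := by exact_mod_cast key
  calc (∑ j ∈ Finset.univ.filter (fun j => i < j), g2 n j)
      = ((∑ j ∈ Finset.univ.filter (fun j => i < j), 2^(n - 1 - (j:ℕ)) : ℕ) : ℝ) := by
        unfold g2; push_cast; rfl
    _ < _ := by unfold g2; exact_mod_cast this


theorem beta_lt_iff {X Y : Finset (Fin n)} : beta X < beta Y ↔ ltW X Y := by
  constructor
  · intro h
    have hne : X ≠ Y := fun hc => by simp [hc] at h
    rcases ltW_or_ltW hne with h1 | h1
    · exact h1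
    · exfalso
      have := sum_lt_of_ltW g2_pos g2_si h1
      rw [← beta_cast, ← beta_cast] at this
      exact absurd h (not_lt.mpr (by exact_mod_cast this.le))
  · intro h
    have := sum_lt_of_ltW g2_pos g2_si h
    rw [← beta_cast, ← beta_cast] at this
    exact_mod_cast this

theorem beta_inj {X Y : Finset (Fin n)} (h : beta X = beta Y) : X = Y := by
  by_contra hne
  rcases ltW_or_ltW hne with h1 | h1 <;>
    [exact absurd h (ne_of_lt (beta_lt_iff.mpr h1));
     exact absurd h.symm (ne_of_lt (beta_lt_iff.mpr h1))]

theorem w_lt_of_ltW {w : Fin n → ℝ} (hpos : ∀ i, 0 < w i)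
    (hsi : ∀ i : Fin n, (∑ j ∈ Finset.univ.filter (fun j => i < j), w j) < w i)
    {X Y : Finset (Fin n)} (h : ltW X Y) : ∑ x ∈ X, w x < ∑ x ∈ Y, w x :=
  sum_lt_of_ltW hpos hsi h

theorem le_iff_beta {w : Fin n → ℝ} {q : ℝ} {A Pm : Finset (Fin n)}
    (hpos : ∀ i, 0 < w i)
    (hsi : ∀ i : Fin n, (∑ j ∈ Finset.univ.filter (fun j => i < j), w j) < w i)
    (hβ : beta Pm + 1 = beta A) (hlo : (∑ x ∈ Pm, w x) < q) (hhi : q ≤ ∑ x ∈ A, w x)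
    (S : Finset (Fin n)) : q ≤ ∑ x ∈ S, w x ↔ beta A ≤ beta S := by
  constructor
  · intro h
    by_contra hc
    push_neg at hc
    have hle : beta S ≤ beta Pm := by omega
    rcases eq_or_lt_of_le hle with he | hlt
    · rw [beta_inj he] at h; linarith
    · have := w_lt_of_ltW hpos hsi (beta_lt_iff.mp hlt)
      linarith
  · intro h
    rcases eq_or_lt_of_le h with he | hlt
    · rw [← beta_inj he]; exact hhi
    · have := w_lt_of_ltW hpos hsi (beta_lt_iff.mp hlt)
      linarith

/-- pivotality characterization when `i ∉ A` -/
theorem char1 {A S : Finset (Fin n)} {i : Fin n} (hiA : i ∉ A) (hiS : i ∉ S) :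
    (beta S < beta A ∧ beta A ≤ beta (insert i S)) ↔
      ∃ j, j ∈ A ∧ i < j ∧ j ∉ S ∧ S ∩ Finset.Iio j = A ∩ Finset.Iio j := by
  constructor
  · rintro ⟨h1, h2⟩
    obtain ⟨j, hjA, hjS, hag⟩ := beta_lt_iff.mp h1
    have hij : i < j := by
      rcases lt_trichotomy i j with h | h | h
      · exact h
      · exact absurd (h ▸ hjA) hiA
      · exfalso
        have : ltW (insert i S) A := by
          refine ⟨j, hjA, ?_, ?_⟩
          · simp only [Finset.mem_insert, not_or]
            exact ⟨fun hc => absurd (hc ▸ hjA) hiA, hjS⟩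
          · rw [← hag]
            ext k
            simp only [Finset.mem_inter, Finset.mem_insert, Finset.mem_Iio]
            constructor
            · rintro ⟨hk1 | hk1, hk2⟩
              · exact absurd (hk1 ▸ hk2) (not_lt.mpr h.le)
              · exact ⟨hk1, hk2⟩
            · rintro ⟨hk1, hk2⟩; exact ⟨Or.inr hk1, hk2⟩
        exact absurd h2 (not_le.mpr (beta_lt_iff.mpr this))
    exact ⟨j, hjA, hij, hjS, hag⟩
  · rintro ⟨j, hjA, hij, hjS, hag⟩
    constructor
    · exact beta_lt_iff.mpr ⟨j, hjA, hjS, hag⟩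
    · have : ltW A (insert i S) := by
        refine ⟨i, Finset.mem_insert_self i S, hiA, ?_⟩
        ext k
        simp only [Finset.mem_inter, Finset.mem_insert, Finset.mem_Iio]
        constructor
        · rintro ⟨hk1, hk2⟩
          have : k ∈ S ∩ Finset.Iio j := by
            have : k ∈ A ∩ Finset.Iio j := by
              simp only [Finset.mem_inter, Finset.mem_Iio]
              exact ⟨hk1, hk2.trans hij⟩
            rwa [hag]
          simp only [Finset.mem_inter] at this
          exact ⟨Or.inr this.1, hk2⟩
        · rintro ⟨hk1 | hk1, hk2⟩
          · exact absurd (hk1 ▸ hk2) (lt_irrefl i)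
          · have : k ∈ A ∩ Finset.Iio j := by
              rw [← hag]
              simp only [Finset.mem_inter, Finset.mem_Iio]
              exact ⟨hk1, hk2.trans hij⟩
            simp only [Finset.mem_inter] at this
            exact ⟨this.1, hk2⟩
      exact (beta_lt_iff.mpr this).le

/-- pivotality characterization when `i ∈ A` -/
theorem char2 {A S : Finset (Fin n)} {i : Fin n} (hiA : i ∈ A) (hiS : i ∉ S) :
    (beta S < beta A ∧ beta A ≤ beta (insert i S)) ↔
      (S ∩ Finset.Iio i = A ∩ Finset.Iio i ∧
        ¬∃ j, j ∈ A ∧ i < j ∧ j ∉ S ∧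
          S ∩ Finset.Iio j = (A ∩ Finset.Iio j).erase i) := by
  constructor
  · rintro ⟨h1, h2⟩
    obtain ⟨j, hjA, hjS, hag⟩ := beta_lt_iff.mp h1
    have hji : j = i := by
      rcases lt_trichotomy j i with h | h | h
      · exfalso
        have : ltW (insert i S) A := by
          refine ⟨j, hjA, ?_, ?_⟩
          · simp only [Finset.mem_insert, not_or]
            exact ⟨fun hc => absurd hc (ne_of_lt h), hjS⟩
          · rw [← hag]
            ext k
            simp only [Finset.mem_inter, Finset.mem_insert, Finset.mem_Iio]
            constructor
            · rintro ⟨hk1 | hk1, hk2⟩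
              · exact absurd (hk1 ▸ hk2) (not_lt.mpr h.le)
              · exact ⟨hk1, hk2⟩
            · rintro ⟨hk1, hk2⟩; exact ⟨Or.inr hk1, hk2⟩
        exact absurd h2 (not_le.mpr (beta_lt_iff.mpr this))
      · exact h
      · exfalso
        have : i ∈ S ∩ Finset.Iio j := by
          rw [hag]; simp only [Finset.mem_inter, Finset.mem_Iio]; exact ⟨hiA, h⟩
        simp only [Finset.mem_inter] at this
        exact hiS this.1
    subst hji
    refine ⟨hag, ?_⟩
    rintro ⟨j', hj'A, hij', hj'S, hag'⟩
    have : ltW (insert j S) A := by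
      refine ⟨j', hj'A, ?_, ?_⟩
      · simp only [Finset.mem_insert, not_or]
        exact ⟨fun hc => absurd hc (ne_of_gt hij'), hj'S⟩
      · ext k
        simp only [Finset.mem_inter, Finset.mem_insert, Finset.mem_Iio]
        constructor
        · rintro ⟨hk1 | hk1, hk2⟩
          · subst hk1; exact ⟨hiA, hk2⟩
          · have : k ∈ (A ∩ Finset.Iio j').erase j := by rw [← hag']; simp [hk1, hk2]
            simp only [Finset.mem_erase, Finset.mem_inter, Finset.mem_Iio] at this
            exact ⟨this.2.1, hk2⟩
        · rintro ⟨hk1, hk2⟩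
          by_cases hk : k = j
          · exact ⟨Or.inl hk, hk2⟩
          · have : k ∈ S ∩ Finset.Iio j' := by
              rw [hag']
              simp only [Finset.mem_erase, Finset.mem_inter, Finset.mem_Iio]
              exact ⟨hk, hk1, hk2⟩
            simp only [Finset.mem_inter] at this
            exact ⟨Or.inr this.1, hk2⟩
    exact absurd h2 (not_le.mpr (beta_lt_iff.mpr this))
  · rintro ⟨hag, hno⟩
    constructor
    · exact beta_lt_iff.mpr ⟨i, hiA, hiS, hag⟩
    · by_contra hc
      push_neg at hc
      obtain ⟨j', hj'A, hj'iS, hag'⟩ := beta_lt_iff.mp hc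
      simp only [Finset.mem_insert, not_or] at hj'iS
      obtain ⟨hj'i, hj'S⟩ := hj'iS
      rcases lt_trichotomy j' i with h | h | h
      · have : j' ∈ S ∩ Finset.Iio i := by
          rw [hag]; simp only [Finset.mem_inter, Finset.mem_Iio]; exact ⟨hj'A, h⟩
        simp only [Finset.mem_inter] at this
        exact hj'S this.1
      · exact hj'i h
      · apply hno
        refine ⟨j', hj'A, h, hj'S, ?_⟩
        ext k
        simp only [Finset.mem_inter, Finset.mem_erase, Finset.mem_Iio]
        constructor
        · rintro ⟨hk1, hk2⟩
          have : k ∈ A ∩ Finset.Iio j' := by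
            rw [← hag']
            simp only [Finset.mem_inter, Finset.mem_insert, Finset.mem_Iio]
            exact ⟨Or.inr hk1, hk2⟩
          simp only [Finset.mem_inter] at this
          exact ⟨fun hc => hiS (hc ▸ hk1), this.1, hk2⟩
        · rintro ⟨hk1, hk2, hk3⟩
          have : k ∈ (insert i S) ∩ Finset.Iio j' := by
            rw [hag']
            simp only [Finset.mem_inter, Finset.mem_Iio]
            exact ⟨hk2, hk3⟩
          simp only [Finset.mem_inter, Finset.mem_insert] at this
          rcases this.1 with hk | hk
          · exact absurd hk hk1
          · exact ⟨hk, hk3⟩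


def gluePerm (p : Fin n) (e₁ : Equiv.Perm {y : Fin n // y < p})
    (e₂ : Equiv.Perm {y : Fin n // p < y}) : Equiv.Perm (Fin n) where
  toFun y := if h : y < p then (e₁ ⟨y, h⟩ : Fin n) else
    if h' : p < y then (e₂ ⟨y, h'⟩ : Fin n) else y
  invFun y := if h : y < p then (e₁.symm ⟨y, h⟩ : Fin n) else
    if h' : p < y then (e₂.symm ⟨y, h'⟩ : Fin n) else y
  left_inv y := by
    by_cases h : y < p
    · have hv : ((e₁ ⟨y, h⟩ : {y : Fin n // y < p}) : Fin n) < p := (e₁ ⟨y, h⟩).2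
      simp only [dif_pos h, dif_pos hv, Subtype.coe_eta, Equiv.symm_apply_apply]
    · by_cases h' : p < y
      · have hv : p < ((e₂ ⟨y, h'⟩ : {y : Fin n // p < y}) : Fin n) := (e₂ ⟨y, h'⟩).2
        simp only [dif_neg h, dif_pos h', dif_neg (asymm hv), dif_pos hv, Subtype.coe_eta,
          Equiv.symm_apply_apply]
      · simp only [dif_neg h, dif_neg h']
  right_inv y := by
    by_cases h : y < p
    · have hv : ((e₁.symm ⟨y, h⟩ : {y : Fin n // y < p}) : Fin n) < p := (e₁.symm ⟨y, h⟩).2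
      simp only [dif_pos h, dif_pos hv, Subtype.coe_eta, Equiv.apply_symm_apply]
    · by_cases h' : p < y
      · have hv : p < ((e₂.symm ⟨y, h'⟩ : {y : Fin n // p < y}) : Fin n) := (e₂.symm ⟨y, h'⟩).2
        simp only [dif_neg h, dif_pos h', dif_neg (asymm hv), dif_pos hv, Subtype.coe_eta,
          Equiv.apply_symm_apply]
      · simp only [dif_neg h, dif_neg h']

theorem gluePerm_lt (p : Fin n) (e₁ : Equiv.Perm {y : Fin n // y < p})
    (e₂ : Equiv.Perm {y : Fin n // p < y}) (y : Fin n) (h : y < p) :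
    gluePerm p e₁ e₂ y = (e₁ ⟨y, h⟩ : Fin n) := by
  simp only [gluePerm, Equiv.coe_fn_mk, dif_pos h]

theorem gluePerm_gt (p : Fin n) (e₁ : Equiv.Perm {y : Fin n // y < p})
    (e₂ : Equiv.Perm {y : Fin n // p < y}) (y : Fin n) (h : p < y) :
    gluePerm p e₁ e₂ y = (e₂ ⟨y, h⟩ : Fin n) := by
  simp only [gluePerm, Equiv.coe_fn_mk, dif_neg (asymm h), dif_pos h]

theorem gluePerm_eq (p : Fin n) (e₁ : Equiv.Perm {y : Fin n // y < p})
    (e₂ : Equiv.Perm {y : Fin n // p < y}) :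
    gluePerm p e₁ e₂ p = p := by
  simp only [gluePerm, Equiv.coe_fn_mk, dif_neg (lt_irrefl p)]

/-- permutations respecting the three-way split at `p` -/
def pairEquiv (p : Fin n) :
    {τ : Equiv.Perm (Fin n) // ∀ y, ((y < p ↔ τ y < p) ∧ (p < y ↔ p < τ y))} ≃
      Equiv.Perm {y : Fin n // y < p} × Equiv.Perm {y : Fin n // p < y} where
  toFun τ := (Equiv.Perm.subtypePerm τ.1 (fun y => (τ.2 y).1.symm),
    Equiv.Perm.subtypePerm τ.1 (fun y => (τ.2 y).2.symm))
  invFun e := ⟨gluePerm p e.1 e.2, by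
    intro y
    constructor
    · constructor
      · intro h; rw [gluePerm_lt p e.1 e.2 y h]; exact (e.1 ⟨y, h⟩).2
      · intro h
        by_contra hc
        rcases lt_trichotomy y p with h' | h' | h'
        · exact hc h'
        · rw [h', gluePerm_eq] at h; exact absurd h (lt_irrefl p)
        · rw [gluePerm_gt p e.1 e.2 y h'] at h
          exact absurd h (asymm (e.2 ⟨y, h'⟩).2)
    · constructor
      · intro h; rw [gluePerm_gt p e.1 e.2 y h]; exact (e.2 ⟨y, h⟩).2
      · intro h
        by_contra hc
        rcases lt_trichotomy y p with h' | h' | h'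
        · rw [gluePerm_lt p e.1 e.2 y h'] at h
          exact absurd h (asymm (e.1 ⟨y, h'⟩).2)
        · rw [h', gluePerm_eq] at h; exact absurd h (lt_irrefl p)
        · exact hc h'⟩
  left_inv τ := by
    apply Subtype.ext
    apply Equiv.ext
    intro y
    rcases lt_trichotomy y p with h | h | h
    · rw [gluePerm_lt p _ _ y h]; rfl
    · subst h
      rw [gluePerm_eq]
      rcases lt_trichotomy (τ.1 y) y with h' | h' | h'
      · exact absurd h' (by rw [← (τ.2 y).1]; exact lt_irrefl y)
      · exact h'.symm
      · exact absurd h' (by rw [← (τ.2 y).2]; exact lt_irrefl y)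
    · rw [gluePerm_gt p _ _ y h]; rfl
  right_inv e := by
    refine Prod.ext ?_ ?_ <;> apply Equiv.ext <;> intro x <;> apply Subtype.ext
    · show (gluePerm p e.1 e.2 (x : Fin n) : Fin n) = _
      rw [gluePerm_lt p e.1 e.2 x x.2, Subtype.coe_eta]
    · show (gluePerm p e.1 e.2 (x : Fin n) : Fin n) = _
      rw [gluePerm_gt p e.1 e.2 x x.2, Subtype.coe_eta]

theorem card_lt_subtype (p : Fin n) : Fintype.card {y : Fin n // y < p} = p := by
  rw [Fintype.card_subtype]
  rw [show Finset.univ.filter (fun y : Fin n => y < p) = Finset.Iio p from by ext; simp]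
  exact Fin.card_Iio p

theorem card_gt_subtype (p : Fin n) : Fintype.card {y : Fin n // p < y} = n - 1 - p := by
  rw [Fintype.card_subtype]
  rw [show Finset.univ.filter (fun y : Fin n => p < y) = Finset.Ioi p from by ext; simp]
  exact Fin.card_Ioi p

theorem card_cut (p : Fin n) :
    Fintype.card {τ : Equiv.Perm (Fin n) // ∀ y, (τ y < τ p ↔ y < p)} =
      Nat.factorial p * Nat.factorial (n - 1 - p) := by
  have key : ∀ τ : Equiv.Perm (Fin n),
      (∀ y, (τ y < τ p ↔ y < p)) ↔ (∀ y, ((y < p ↔ τ y < p) ∧ (p < y ↔ p < τ y))) := by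
    intro τ
    constructor
    · intro h
      have hfix : τ p = p := by
        have himg : (Finset.Iio p).image τ = Finset.Iio (τ p) := by
          ext z
          simp only [Finset.mem_image, Finset.mem_Iio]
          constructor
          · rintro ⟨y, hy, rfl⟩; exact (h y).mpr hy
          · intro hz
            exact ⟨τ.symm z, by rw [← h (τ.symm z), Equiv.apply_symm_apply]; exact hz,
              Equiv.apply_symm_apply τ z⟩
        have hcard := congrArg Finset.card himg
        rw [Finset.card_image_of_injective _ τ.injective, Fin.card_Iio, Fin.card_Iio] at hcard
        exact (Fin.ext hcard).symm
      intro y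
      constructor
      · constructor
        · intro hy; have := (h y).mpr hy; rwa [hfix] at this
        · intro hy; exact (h y).mp (by rwa [hfix])
      · constructor
        · intro hy
          rcases lt_trichotomy p (τ y) with h' | h' | h'
          · exact h'
          · exact absurd (τ.injective (h'.symm.trans hfix.symm)) (ne_of_gt hy)
          · rw [← hfix] at h'; exact absurd ((h y).mp h') (asymm hy)
        · intro hy
          rcases lt_trichotomy p y with h' | h' | h'
          · exact h'
          · subst h'; rw [hfix] at hy; exact absurd hy (lt_irrefl p)
          · rw [← hfix] at hy
            exact absurd ((h y).mpr h') (asymm hy)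
    · intro h y
      have hfix : τ p = p := by
        have h1 := (h p).1
        have h2 := (h p).2
        simp only [lt_irrefl, false_iff] at h1 h2
        exact le_antisymm (not_lt.mp h2) (not_lt.mp h1)
      rw [hfix]
      exact ((h y).1).symm
  rw [Fintype.card_congr ((Equiv.subtypeEquivRight key).trans (pairEquiv p))]
  rw [Fintype.card_prod, Fintype.card_perm, Fintype.card_perm, card_lt_subtype, card_gt_subtype]



theorem exists_perm_pred {i : Fin n} {B : Finset (Fin n)} (hiB : i ∉ B) :
    ∃ σ : Equiv.Perm (Fin n), (∀ j, (σ j < σ i ↔ j ∈ B)) ∧ ((σ i : ℕ) = B.card) := by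
  classical
  have hBn : B.card + 1 ≤ n := by
    have : (insert i B).card ≤ n := by
      simpa using Finset.card_le_card (Finset.subset_univ (insert i B))
    rwa [Finset.card_insert_of_notMem hiB] at this
  set L1 : List (Fin n) := B.sort (· ≤ ·) with hL1
  set L2 : List (Fin n) := (Finset.univ \ insert i B).sort (· ≤ ·) with hL2
  set l : List (Fin n) := L1 ++ i :: L2 with hl
  have hmem1 : ∀ x, x ∈ L1 ↔ x ∈ B := fun x => Finset.mem_sort _
  have hmem2 : ∀ x, x ∈ L2 ↔ (x ≠ i ∧ x ∉ B) := by
    intro x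
    rw [hL2, Finset.mem_sort, Finset.mem_sdiff]
    simp [Finset.mem_insert, not_or]
  have hnd : l.Nodup := by
    rw [hl]
    apply List.Nodup.append (Finset.sort_nodup _ _)
    · apply List.Nodup.cons
      · intro hc; exact ((hmem2 i).mp hc).1 rfl
      · exact Finset.sort_nodup _ _
    · intro x hx1 hx2
      rcases List.mem_cons.mp hx2 with h | h
      · exact hiB (h ▸ (hmem1 x).mp hx1)
      · exact ((hmem2 x).mp h).2 ((hmem1 x).mp hx1)
  have hmemall : ∀ x : Fin n, x ∈ l := by
    intro x
    rw [hl, List.mem_append, List.mem_cons]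
    by_cases h1 : x ∈ B
    · exact Or.inl ((hmem1 x).mpr h1)
    · by_cases h2 : x = i
      · exact Or.inr (Or.inl h2)
      · exact Or.inr (Or.inr ((hmem2 x).mpr ⟨h2, h1⟩))
  have hL1len : L1.length = B.card := Finset.length_sort _
  have hlen : l.length = n := by
    have h1 := List.toFinset_card_of_nodup hnd
    have huniv : l.toFinset = Finset.univ := by
      ext x; simp [List.mem_toFinset, hmemall x]
    rw [huniv] at h1
    simp at h1
    omega
  set e := List.Nodup.getEquivOfForallMemList l hnd hmemall with he
  set σ : Equiv.Perm (Fin n) := ((finCongr hlen.symm).trans e).symm with hσ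
  have hval : ∀ x : Fin n, (σ x : ℕ) = ((e.symm x : Fin l.length) : ℕ) := by
    intro x; rw [hσ]; rfl
  have hgete : ∀ (k : Fin l.length), (e k : Fin n) = l.get k := fun k => rfl
  have hgetb : ∀ (kk : ℕ) (hk : kk < l.length), (l[kk] ∈ B ↔ kk < B.card) := by
    intro kk hk
    constructor
    · intro hmem
      by_contra hc
      push_neg at hc
      have h1 : L1.length ≤ kk := by omega
      have h2 : l[kk] = (i :: L2)[kk - L1.length]'(by
          simp only [hl, List.length_append] at hk; omega) :=
        List.getElem_append_right h1
      have : l[kk] ∈ i :: L2 := by rw [h2]; exact List.getElem_mem _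
      rcases List.mem_cons.mp this with h | h
      · exact hiB (h ▸ hmem)
      · exact ((hmem2 _).mp h).2 hmem
    · intro hkk
      have hkk' : kk < L1.length := by omega
      have h2 : l[kk] = L1[kk] := List.getElem_append_left hkk'
      rw [h2]
      exact (hmem1 _).mp (List.getElem_mem _)
  have hgeti : l[B.card]'(by omega) = i := by
    have h1 : L1.length ≤ B.card := by omega
    have h2 : l[B.card]'(by omega) = (i :: L2)[B.card - L1.length]'(by
        simp only [hl, List.length_append] at hlen ⊢; omega) :=
      List.getElem_append_right h1
    rw [h2]
    simp [hL1len]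
  have hidx : ∀ x : Fin n, l[((e.symm x : Fin l.length) : ℕ)]'(e.symm x).isLt = x := by
    intro x
    have := hgete (e.symm x)
    rw [Equiv.apply_symm_apply] at this
    conv_rhs => rw [this]
    simp [List.get_eq_getElem]
  have hσi : (σ i : ℕ) = B.card := by
    rw [hval]
    have hik : e ⟨B.card, by omega⟩ = i := by
      rw [hgete]; simpa [List.get_eq_getElem] using hgeti
    rw [← hik, Equiv.symm_apply_apply]
  refine ⟨σ, ?_, hσi⟩
  intro j
  have hj : (σ j : ℕ) < B.card ↔ j ∈ B := by
    rw [hval]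
    constructor
    · intro h
      have := (hgetb _ (e.symm j).isLt).mpr h
      rwa [hidx j] at this
    · intro h
      exact (hgetb _ (e.symm j).isLt).mp (by rwa [hidx j])
  constructor
  · intro h
    exact hj.mp (by rw [← hσi]; exact h)
  · intro h
    have := hj.mpr h
    rw [← hσi] at this
    exact this




/-- the predecessor set of `i` under `σ` -/
def predSet (σ : Equiv.Perm (Fin n)) (i : Fin n) : Finset (Fin n) :=
  Finset.univ.filter fun j => σ j < σ i

theorem base_count {i : Fin n} {B : Finset (Fin n)} (hiB : i ∉ B) :
    (Finset.univ.filter fun σ : Equiv.Perm (Fin n) => predSet σ i = B).card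
      = Nat.factorial B.card * Nat.factorial (n - 1 - B.card) := by
  classical
  obtain ⟨σ₀, hσ₀, hσ₀i⟩ := exists_perm_pred hiB
  set p := σ₀ i with hp
  have key : ∀ σ : Equiv.Perm (Fin n),
      predSet σ i = B ↔ (∀ y, ((σ * σ₀⁻¹) y < (σ * σ₀⁻¹) p ↔ y < p)) := by
    intro σ
    have hep : (σ * σ₀⁻¹) p = σ i := by
      simp [hp, Equiv.Perm.mul_apply]
    constructor
    · intro h y
      rw [hep, Equiv.Perm.mul_apply]
      have hmem : σ₀⁻¹ y ∈ B ↔ σ (σ₀⁻¹ y) < σ i := by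
        rw [← h]; simp [predSet]
      rw [← hmem]
      rw [← hσ₀ (σ₀⁻¹ y)]
      simp [hp]
    · intro h
      ext j
      simp only [predSet, Finset.mem_filter, Finset.mem_univ, true_and]
      have := h (σ₀ j)
      rw [hep, Equiv.Perm.mul_apply] at this
      simp only [Equiv.Perm.inv_def, Equiv.symm_apply_apply] at this
      rw [this, hp, hσ₀ j]
  have hcard : (Finset.univ.filter fun σ : Equiv.Perm (Fin n) => predSet σ i = B).card
      = Fintype.card {σ : Equiv.Perm (Fin n) // predSet σ i = B} :=
    (Fintype.card_subtype _).symm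
  rw [hcard]
  have hequiv : {σ : Equiv.Perm (Fin n) // predSet σ i = B} ≃
      {τ : Equiv.Perm (Fin n) // ∀ y, (τ y < τ p ↔ y < p)} :=
    (Equiv.mulRight σ₀⁻¹).subtypeEquiv (by
      intro σ
      rw [key σ]
      rfl)
  rw [Fintype.card_congr hequiv, card_cut p, hσ₀i]


theorem count_lemma {i : Fin n} (k : ℕ) :
    ∀ (M B : Finset (Fin n)), i ∉ M → B ⊆ M → n - 1 - M.card = k →
    Nat.factorial (M.card + 1) *
        (Finset.univ.filter fun σ : Equiv.Perm (Fin n) => predSet σ i ∩ M = B).card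
      = Nat.factorial n * (Nat.factorial B.card * Nat.factorial (M.card - B.card)) := by
  induction k with
  | zero =>
    intro M B hiM hBM hk
    have hM1 : M ⊆ Finset.univ.erase i := by
      intro x hx
      simp only [Finset.mem_erase, Finset.mem_univ, and_true]
      exact fun hc => hiM (hc ▸ hx)
    have hcard : M.card ≤ n - 1 := by
      have := Finset.card_le_card hM1
      simpa [Finset.card_erase_of_mem] using this
    have hMcard : M.card = n - 1 := by omega
    have hMeq : M = Finset.univ.erase i := by
      apply Finset.eq_of_subset_of_card_le hM1
      rw [hMcard]
      simp [Finset.card_erase_of_mem]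
    have hn1 : 1 ≤ n := Nat.one_le_iff_ne_zero.mpr (by rintro rfl; exact i.elim0)
    have hpred : ∀ σ : Equiv.Perm (Fin n), predSet σ i ∩ M = predSet σ i := by
      intro σ
      rw [hMeq]
      ext x
      simp only [Finset.mem_inter, Finset.mem_erase, Finset.mem_univ, and_true, predSet,
        Finset.mem_filter, true_and]
      constructor
      · tauto
      · intro hx
        exact ⟨hx, fun hc => absurd (hc ▸ hx) (lt_irrefl _)⟩
    simp only [hpred]
    have hiB : i ∉ B := fun hc => hiM (hBM hc)
    rw [base_count hiB, hMcard]
    rw [show n - 1 + 1 = n by omega]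
  | succ k ih =>
    intro M B hiM hBM hk
    have hx : ((Finset.univ.erase i) \ M).Nonempty := by
      rw [← Finset.card_pos, Finset.card_sdiff_of_subset]
      · have : i ∈ Finset.univ := Finset.mem_univ i
        rw [Finset.card_erase_of_mem this]
        simp only [Finset.card_univ, Fintype.card_fin]
        omega
      · intro x hx
        simp only [Finset.mem_erase, Finset.mem_univ, and_true]
        exact fun hc => hiM (hc ▸ hx)
    obtain ⟨x, hxmem⟩ := hx
    rw [Finset.mem_sdiff, Finset.mem_erase] at hxmem
    obtain ⟨⟨hxi, -⟩, hxM⟩ := hxmem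
    have hxB : x ∉ B := fun hc => hxM (hBM hc)
    have hiM' : i ∉ insert x M := by
      simp only [Finset.mem_insert, not_or]
      exact ⟨fun hc => hxi hc.symm, hiM⟩
    have hcard' : (insert x M).card = M.card + 1 := Finset.card_insert_of_notMem hxM
    have hk' : n - 1 - (insert x M).card = k := by rw [hcard']; omega
    -- split the count
    set T := Finset.univ.filter fun σ : Equiv.Perm (Fin n) => predSet σ i ∩ M = B with hT
    have key1 : ∀ σ : Equiv.Perm (Fin n),
        (predSet σ i ∩ insert x M = insert x B) ↔
          (predSet σ i ∩ M = B ∧ x ∈ predSet σ i) := by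
      intro σ
      constructor
      · intro h
        have hxp : x ∈ predSet σ i := by
          have : x ∈ predSet σ i ∩ insert x M := by
            rw [h]; exact Finset.mem_insert_self x B
          exact (Finset.mem_inter.mp this).1
        refine ⟨?_, hxp⟩
        ext j
        constructor
        · intro hj
          rw [Finset.mem_inter] at hj
          have : j ∈ insert x B := by
            rw [← h, Finset.mem_inter]
            exact ⟨hj.1, Finset.mem_insert_of_mem hj.2⟩
          rcases Finset.mem_insert.mp this with h' | h'
          · exact absurd (h' ▸ hj.2) hxM
          · exact h'
        · intro hj
          rw [Finset.mem_inter]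
          have : j ∈ predSet σ i ∩ insert x M := by
            rw [h]; exact Finset.mem_insert_of_mem hj
          exact ⟨(Finset.mem_inter.mp this).1, hBM hj⟩
      · rintro ⟨h1, h2⟩
        ext j
        rw [Finset.mem_inter, Finset.mem_insert, Finset.mem_insert]
        by_cases hj : j = x
        · subst hj; simp [h2]
        · constructor
          · rintro ⟨hp, hc | hm⟩
            · exact absurd hc hj
            · exact Or.inr (by rw [← h1, Finset.mem_inter]; exact ⟨hp, hm⟩)
          · rintro (hc | hb)
            · exact absurd hc hj
            · have : j ∈ predSet σ i ∩ M := by rw [h1]; exact hb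
              rw [Finset.mem_inter] at this
              exact ⟨this.1, Or.inr this.2⟩
    have key2 : ∀ σ : Equiv.Perm (Fin n),
        (predSet σ i ∩ insert x M = B) ↔
          (predSet σ i ∩ M = B ∧ x ∉ predSet σ i) := by
      intro σ
      constructor
      · intro h
        have hxp : x ∉ predSet σ i := by
          intro hc
          have : x ∈ B := by
            rw [← h, Finset.mem_inter]
            exact ⟨hc, Finset.mem_insert_self x M⟩
          exact hxB this
        refine ⟨?_, hxp⟩
        ext j
        rw [Finset.mem_inter]
        constructor
        · rintro ⟨hp, hm⟩
          rw [← h, Finset.mem_inter]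
          exact ⟨hp, Finset.mem_insert_of_mem hm⟩
        · intro hb
          have : j ∈ predSet σ i ∩ insert x M := by rw [h]; exact hb
          rw [Finset.mem_inter, Finset.mem_insert] at this
          rcases this.2 with hc | hm
          · exact absurd (hc ▸ hb) hxB
          · exact ⟨this.1, hm⟩
      · rintro ⟨h1, h2⟩
        ext j
        rw [Finset.mem_inter, Finset.mem_insert]
        by_cases hj : j = x
        · subst hj
          constructor
          · rintro ⟨hc, -⟩; exact absurd hc h2
          · intro hb; exact absurd hb hxB
        · constructor
          · rintro ⟨hp, hc | hm⟩
            · exact absurd hc hj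
            · rw [← h1, Finset.mem_inter]; exact ⟨hp, hm⟩
          · intro hb
            have : j ∈ predSet σ i ∩ M := by rw [h1]; exact hb
            rw [Finset.mem_inter] at this
            exact ⟨this.1, Or.inr this.2⟩
    have e1 : Finset.univ.filter (fun σ : Equiv.Perm (Fin n) =>
        predSet σ i ∩ insert x M = insert x B) =
        T.filter (fun σ => x ∈ predSet σ i) := by
      rw [hT, Finset.filter_filter]
      exact Finset.filter_congr (fun σ _ => by rw [key1 σ])
    have e2 : Finset.univ.filter (fun σ : Equiv.Perm (Fin n) =>
        predSet σ i ∩ insert x M = B) =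
        T.filter (fun σ => x ∉ predSet σ i) := by
      rw [hT, Finset.filter_filter]
      exact Finset.filter_congr (fun σ _ => by rw [key2 σ])
    have hsplit : (Finset.univ.filter fun σ : Equiv.Perm (Fin n) =>
          predSet σ i ∩ insert x M = insert x B).card +
        (Finset.univ.filter fun σ : Equiv.Perm (Fin n) =>
          predSet σ i ∩ insert x M = B).card = T.card := by
      rw [e1, e2]
      exact Finset.card_filter_add_card_filter_not _
    -- apply the induction hypothesis
    have hBM1 : insert x B ⊆ insert x M := Finset.insert_subset_insert x hBM
    have hBM2 : B ⊆ insert x M := hBM.trans (Finset.subset_insert x M)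
    have ih1 := ih (insert x M) (insert x B) hiM' hBM1 hk'
    have ih2 := ih (insert x M) B hiM' hBM2 hk'
    rw [hcard'] at ih1 ih2
    rw [Finset.card_insert_of_notMem hxB] at ih1
    have hbm : B.card ≤ M.card := Finset.card_le_card hBM
    obtain ⟨c, hc⟩ : ∃ c, M.card = B.card + c := ⟨M.card - B.card, by omega⟩
    set b := B.card with hb
    rw [hc] at ih1 ih2 ⊢
    rw [show b + c + 1 - (b + 1) = c by omega] at ih1
    rw [show b + c + 1 - b = c + 1 by omega] at ih2
    rw [show b + c - b = c by omega]
    have hbig : (b + c + 2) * (Nat.factorial (b + c + 1) * T.card) =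
        (b + c + 2) * (Nat.factorial n * (Nat.factorial b * Nat.factorial c)) := by
      calc (b + c + 2) * (Nat.factorial (b + c + 1) * T.card)
          = Nat.factorial (b + c + 1 + 1) * T.card := by
            rw [← mul_assoc, ← Nat.factorial_succ]
        _ = Nat.factorial (b + c + 1 + 1) *
              ((Finset.univ.filter fun σ : Equiv.Perm (Fin n) =>
                predSet σ i ∩ insert x M = insert x B).card +
              (Finset.univ.filter fun σ : Equiv.Perm (Fin n) =>
                predSet σ i ∩ insert x M = B).card) := by rw [hsplit]
        _ = Nat.factorial n * (Nat.factorial (b + 1) * Nat.factorial c) +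
            Nat.factorial n * (Nat.factorial b * Nat.factorial (c + 1)) := by
              rw [Nat.mul_add, ih1, ih2]
        _ = (b + c + 2) * (Nat.factorial n * (Nat.factorial b * Nat.factorial c)) := by
              rw [Nat.factorial_succ, Nat.factorial_succ,
                show b + c + 2 = (b + 1) + (c + 1) by omega]
              ring
    exact Nat.eq_of_mul_eq_mul_left (by omega) hbig


theorem not_mem_predSet (σ : Equiv.Perm (Fin n)) (i : Fin n) : i ∉ predSet σ i := by
  simp [predSet]

theorem predSet_eq (σ : Equiv.Perm (Fin n)) (i : Fin n) :
    (Finset.univ.filter fun j => σ j < σ i) = predSet σ i := rfl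

theorem evt {S R : Finset (Fin n)} {c : Fin n} (hR : R ⊆ Finset.Iio c) :
    (c ∉ S ∧ S ∩ Finset.Iio c = R) ↔ S ∩ Finset.Iic c = R := by
  constructor
  · rintro ⟨h1, h2⟩
    ext x
    rw [Finset.mem_inter, Finset.mem_Iic]
    constructor
    · rintro ⟨hx1, hx2⟩
      rcases lt_or_eq_of_le hx2 with h | h
      · rw [← h2, Finset.mem_inter, Finset.mem_Iio]; exact ⟨hx1, h⟩
      · exact absurd (h ▸ hx1) h1
    · intro hx
      have := hR hx
      rw [Finset.mem_Iio] at this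
      have hx' : x ∈ S ∩ Finset.Iio c := by rw [h2]; exact hx
      rw [Finset.mem_inter] at hx'
      exact ⟨hx'.1, this.le⟩
  · intro h
    have h1 : c ∉ S := by
      intro hc
      have : c ∈ R := by rw [← h, Finset.mem_inter, Finset.mem_Iic]; exact ⟨hc, le_refl c⟩
      exact absurd (Finset.mem_Iio.mp (hR this)) (lt_irrefl c)
    refine ⟨h1, ?_⟩
    ext x
    rw [Finset.mem_inter, Finset.mem_Iio]
    constructor
    · rintro ⟨hx1, hx2⟩
      rw [← h, Finset.mem_inter, Finset.mem_Iic]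
      exact ⟨hx1, hx2.le⟩
    · intro hx
      have h2 := Finset.mem_Iio.mp (hR hx)
      have : x ∈ S ∩ Finset.Iic c := by rw [h]; exact hx
      rw [Finset.mem_inter] at this
      exact ⟨this.1, h2⟩

theorem count_event {i c : Fin n} {B : Finset (Fin n)} (hic : i ≤ c)
    (hB : B ⊆ Finset.Iio c) (hiB : i ∉ B) :
    ((c:ℕ) + 1) * Nat.choose c B.card *
        (Finset.univ.filter fun σ : Equiv.Perm (Fin n) =>
          predSet σ i ∩ Finset.Iic c = B).card
      = Nat.factorial n := by
  classical
  set M := (Finset.Iic c).erase i with hM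
  have hiM : i ∉ M := Finset.notMem_erase i _
  have hBM : B ⊆ M := by
    intro x hx
    rw [hM, Finset.mem_erase, Finset.mem_Iic]
    exact ⟨fun hc => hiB (hc ▸ hx), (Finset.mem_Iio.mp (hB hx)).le⟩
  have hMcard : M.card = (c : ℕ) := by
    rw [hM, Finset.card_erase_of_mem (Finset.mem_Iic.mpr hic), Fin.card_Iic]
    omega
  have hsame : ∀ σ : Equiv.Perm (Fin n), predSet σ i ∩ Finset.Iic c = predSet σ i ∩ M := by
    intro σ
    rw [hM]
    ext x
    simp only [Finset.mem_inter, Finset.mem_erase, Finset.mem_Iic]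
    constructor
    · rintro ⟨h1, h2⟩
      exact ⟨h1, fun hc => absurd (hc ▸ h1) (not_mem_predSet σ i), h2⟩
    · rintro ⟨h1, -, h2⟩; exact ⟨h1, h2⟩
  have hcl := count_lemma (n - 1 - M.card) M B hiM hBM rfl
  simp only [hsame] at *
  have hbc : B.card ≤ (c : ℕ) := by
    have := Finset.card_le_card hB
    rwa [Fin.card_Iio] at this
  have hfac := Nat.choose_mul_factorial_mul_factorial hbc
  rw [hMcard] at hcl
  -- (c+1)! * N = n! * (b! * (c-b)!)
  have hpos : 0 < Nat.factorial B.card * Nat.factorial ((c:ℕ) - B.card) :=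
    Nat.mul_pos (Nat.factorial_pos _) (Nat.factorial_pos _)
  apply Nat.eq_of_mul_eq_mul_right hpos
  calc ((c:ℕ) + 1) * Nat.choose c B.card *
        (Finset.univ.filter fun σ : Equiv.Perm (Fin n) =>
          predSet σ i ∩ M = B).card *
        (Nat.factorial B.card * Nat.factorial ((c:ℕ) - B.card))
      = ((c:ℕ) + 1) * (Nat.choose c B.card * Nat.factorial B.card *
          Nat.factorial ((c:ℕ) - B.card)) *
        (Finset.univ.filter fun σ : Equiv.Perm (Fin n) =>
          predSet σ i ∩ M = B).card := by ring
    _ = ((c:ℕ) + 1) * Nat.factorial c *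
        (Finset.univ.filter fun σ : Equiv.Perm (Fin n) =>
          predSet σ i ∩ M = B).card := by rw [hfac]
    _ = Nat.factorial ((c:ℕ) + 1) *
        (Finset.univ.filter fun σ : Equiv.Perm (Fin n) =>
          predSet σ i ∩ M = B).card := by rw [Nat.factorial_succ]
    _ = Nat.factorial n * (Nat.factorial B.card * Nat.factorial ((c:ℕ) - B.card)) := hcl

end Stmt12

open Stmt12

/-- Closed-form formula for the Shapley values with super-increasing weights.
Agents are `0`-indexed: agent `i : Fin n` is the paper's agent `i+1`, so the paper's
`a_t` equals `(f t : ℕ) + 1` and `C(a_t - 1, t) = C((f t : ℕ), t)`.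
`A` is the set with `q ∈ (w(A⁻), w(A)]` (where `β(A⁻) + 1 = β(A)`), and
`f` enumerates `A` in increasing order starting from index `0`. -/
theorem stmt12 (n : ℕ) (w : Fin n → ℝ) (hpos : ∀ i, 0 < w i) (hdec : StrictAnti w)
    (hsi : ∀ i : Fin n, (∑ j ∈ Finset.univ.filter (fun j => i < j), w j) < w i)
    (q : ℝ) (hq1 : 0 < q) (hq2 : q ≤ ∑ i : Fin n, w i)
    (A Pm : Finset (Fin n))
    (hβ : (∑ i ∈ Pm, 2^(n - 1 - (i:ℕ)) : ℕ) + 1 = ∑ i ∈ A, 2^(n - 1 - (i:ℕ)))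
    (hlo : (∑ i ∈ Pm, w i) < q) (hhi : q ≤ ∑ i ∈ A, w i)
    (f : Fin A.card → Fin n) (hf : ∀ t, f t = (A.orderIsoOfFin rfl t : Fin n)) :
    (∀ i : Fin n, i ∉ A →
      shapley n w q i
        = ∑ t : Fin A.card,
            if i < f t then (1:ℝ)/(((f t : ℕ) + 1) * Nat.choose (f t : ℕ) (t : ℕ)) else 0) ∧
    (∀ s : Fin A.card,
      shapley n w q (f s)
        = (1:ℝ)/(((f s : ℕ) + 1) * Nat.choose (f s : ℕ) (s : ℕ))
          - ∑ t : Fin A.card,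
              if f s < f t then (1:ℝ)/(((f t : ℕ) + 1) * Nat.choose (f t : ℕ) ((t : ℕ) - 1))
              else 0) := by
  classical
  have hβ' : beta Pm + 1 = beta A := hβ
  have hqw : ∀ S : Finset (Fin n), q ≤ ∑ x ∈ S, w x ↔ beta A ≤ beta S :=
    le_iff_beta hpos hsi hβ' hlo hhi
  have hfm : StrictMono f := by
    intro a b h
    rw [hf a, hf b]
    exact Subtype.coe_lt_coe.mpr ((A.orderIsoOfFin rfl).lt_iff_lt.mpr h)
  have hfinj : Function.Injective f := hfm.injective
  have hfA : ∀ t, f t ∈ A := fun t => by rw [hf t]; exact (A.orderIsoOfFin rfl t).2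
  have hfsurj : ∀ j, j ∈ A → ∃ t, f t = j := by
    intro j hj
    refine ⟨(A.orderIsoOfFin rfl).symm ⟨j, hj⟩, ?_⟩
    rw [hf]
    simp
  have hfle : ∀ t : Fin A.card, (t:ℕ) ≤ (f t : ℕ) := by
    have key : ∀ k : ℕ, ∀ t : Fin A.card, (t:ℕ) = k → k ≤ (f t:ℕ) := by
      intro k
      induction k with
      | zero => intro t _; exact Nat.zero_le _
      | succ k ih =>
        intro t ht
        have hk : k < A.card := by have := t.isLt; omega
        have h1 := ih ⟨k, hk⟩ rfl
        have hlt : f ⟨k, hk⟩ < f t := hfm (by  simp [Fin.lt_def, ht])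
        have := Fin.lt_def.mp hlt
        omega
    exact fun t => key t t rfl
  have hcardAI : ∀ t : Fin A.card, (A ∩ Finset.Iio (f t)).card = (t:ℕ) := by
    intro t
    rw [show A ∩ Finset.Iio (f t) = (Finset.univ.filter (fun u : Fin A.card => u < t)).image f by
      ext x
      simp only [Finset.mem_inter, Finset.mem_Iio, Finset.mem_image, Finset.mem_filter,
        Finset.mem_univ, true_and]
      constructor
      · rintro ⟨hx1, hx2⟩
        obtain ⟨u, rfl⟩ := hfsurj x hx1
        exact ⟨u, hfm.lt_iff_lt.mp hx2, rfl⟩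
      · rintro ⟨u, hu1, rfl⟩
        exact ⟨hfA u, hfm hu1⟩]
    rw [Finset.card_image_of_injective _ hfinj]
    rw [show Finset.univ.filter (fun u : Fin A.card => u < t) = Finset.Iio t from by ext; simp]
    exact Fin.card_Iio t
  have hdiff : ∀ (i : Fin n) (σ : Equiv.Perm (Fin n)),
      ((if q ≤ ∑ j ∈ insert i (predSet σ i), w j then (1:ℝ) else 0)
        - (if q ≤ ∑ j ∈ predSet σ i, w j then (1:ℝ) else 0))
      = if (beta (predSet σ i) < beta A ∧
            beta A ≤ beta (insert i (predSet σ i))) then (1:ℝ) else 0 := by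
    intro i σ
    set S := predSet σ i with hSdef
    have hiS : i ∉ S := not_mem_predSet σ i
    by_cases h1 : q ≤ ∑ j ∈ S, w j
    · have h2 : q ≤ ∑ j ∈ insert i S, w j := by
        rw [Finset.sum_insert hiS]
        have := hpos i; linarith
      rw [if_pos h1, if_pos h2, if_neg, sub_self]
      rintro ⟨hc, -⟩
      exact absurd ((hqw S).mp h1) (not_le.mpr hc)
    · by_cases h2 : q ≤ ∑ j ∈ insert i S, w j
      · rw [if_pos h2, if_neg h1, if_pos, sub_zero]
        exact ⟨not_le.mp (fun hc => h1 ((hqw S).mpr hc)), (hqw _).mp h2⟩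
      · rw [if_neg h1, if_neg h2, if_neg, sub_self]
        rintro ⟨-, hc⟩
        exact h2 ((hqw _).mpr hc)
  have hnfac : (0:ℝ) < (Nat.factorial n : ℝ) := by
    exact_mod_cast Nat.factorial_pos n
  constructor
  · intro i hiA
    have hpt : ∀ σ : Equiv.Perm (Fin n),
        (if (beta (predSet σ i) < beta A ∧
            beta A ≤ beta (insert i (predSet σ i))) then (1:ℝ) else 0)
        = ∑ t : Fin A.card, if (i < f t ∧
            predSet σ i ∩ Finset.Iic (f t) = A ∩ Finset.Iio (f t)) then (1:ℝ) else 0 := by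
      intro σ
      set S := predSet σ i with hSdef
      have hiS : i ∉ S := not_mem_predSet σ i
      have hchar := char1 hiA hiS
      have hcond : ∀ t : Fin A.card,
          (i < f t ∧ S ∩ Finset.Iic (f t) = A ∩ Finset.Iio (f t)) ↔
          (f t ∈ A ∧ i < f t ∧ f t ∉ S ∧
            S ∩ Finset.Iio (f t) = A ∩ Finset.Iio (f t)) := by
        intro t
        have he := evt (S := S) (c := f t) (R := A ∩ Finset.Iio (f t))
          Finset.inter_subset_right
        constructor
        · rintro ⟨h1, h2⟩
          obtain ⟨h3, h4⟩ := he.mpr h2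
          exact ⟨hfA t, h1, h3, h4⟩
        · rintro ⟨-, h1, h2, h3⟩
          exact ⟨h1, he.mp ⟨h2, h3⟩⟩
      have hiff : (beta S < beta A ∧ beta A ≤ beta (insert i S)) ↔
          ∃ t : Fin A.card, i < f t ∧
            S ∩ Finset.Iic (f t) = A ∩ Finset.Iio (f t) := by
        rw [hchar]
        constructor
        · rintro ⟨j, hj1, hj2, hj3, hj4⟩
          obtain ⟨t, rfl⟩ := hfsurj j hj1
          exact ⟨t, (hcond t).mpr ⟨hj1, hj2, hj3, hj4⟩⟩
        · rintro ⟨t, ht⟩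
          obtain ⟨h1', h2', h3', h4'⟩ := (hcond t).mp ht
          exact ⟨f t, h1', h2', h3', h4'⟩
      have hkey : ∀ t t' : Fin A.card, f t < f t' →
          (S ∩ Finset.Iic (f t) = A ∩ Finset.Iio (f t)) →
          (S ∩ Finset.Iic (f t') = A ∩ Finset.Iio (f t')) → False := by
        intro t t' hlt h h'
        have hft : f t ∈ S := by
          have hmem : f t ∈ A ∩ Finset.Iio (f t') := by
            rw [Finset.mem_inter, Finset.mem_Iio]; exact ⟨hfA t, hlt⟩
          rw [← h'] at hmem
          exact (Finset.mem_inter.mp hmem).1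
        have hmem2 : f t ∈ A ∩ Finset.Iio (f t) := by
          rw [← h, Finset.mem_inter, Finset.mem_Iic]
          exact ⟨hft, le_refl _⟩
        rw [Finset.mem_inter, Finset.mem_Iio] at hmem2
        exact absurd hmem2.2 (lt_irrefl _)
      by_cases hex : ∃ t : Fin A.card, i < f t ∧
          S ∩ Finset.Iic (f t) = A ∩ Finset.Iio (f t)
      · obtain ⟨t, ht⟩ := hex
        rw [if_pos (hiff.mpr ⟨t, ht⟩)]
        rw [Finset.sum_eq_single_of_mem t (Finset.mem_univ t)]
        · rw [if_pos ht]
        · intro t' _ hne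
          rw [if_neg]
          rintro ⟨hc1, hc2⟩
          rcases Ne.lt_or_gt (fun hc => hne (hfinj hc)) with hlt | hlt
          · exact hkey t' t hlt hc2 ht.2
          · exact hkey t t' hlt ht.2 hc2
      · rw [if_neg (fun hc => hex (hiff.mp hc)), Finset.sum_eq_zero]
        intro t _
        rw [if_neg (fun hc => hex ⟨t, hc⟩)]
    have hstep : shapley n w q i
        = ∑ t : Fin A.card, (if i < f t then
            (((Finset.univ.filter fun σ : Equiv.Perm (Fin n) =>
              predSet σ i ∩ Finset.Iic (f t) = A ∩ Finset.Iio (f t)).card : ℝ)) else 0)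
          / (Nat.factorial n) := by
      unfold shapley
      rw [← Finset.sum_div]
      congr 1
      calc ∑ σ : Equiv.Perm (Fin n),
            ((if q ≤ ∑ j ∈ insert i (Finset.univ.filter fun j => σ j < σ i), w j
                then (1:ℝ) else 0)
              - (if q ≤ ∑ j ∈ Finset.univ.filter (fun j => σ j < σ i), w j
                then (1:ℝ) else 0))
          = ∑ σ : Equiv.Perm (Fin n), ∑ t : Fin A.card, (if (i < f t ∧
              predSet σ i ∩ Finset.Iic (f t) = A ∩ Finset.Iio (f t)) then (1:ℝ) else 0) :=
            Finset.sum_congr rfl (fun σ _ => by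
              rw [predSet_eq, hdiff i σ, hpt σ])
        _ = ∑ t : Fin A.card, ∑ σ : Equiv.Perm (Fin n), (if (i < f t ∧
              predSet σ i ∩ Finset.Iic (f t) = A ∩ Finset.Iio (f t)) then (1:ℝ) else 0) :=
            Finset.sum_comm
        _ = ∑ t : Fin A.card, (if i < f t then
            (((Finset.univ.filter fun σ : Equiv.Perm (Fin n) =>
              predSet σ i ∩ Finset.Iic (f t) = A ∩ Finset.Iio (f t)).card : ℝ)) else 0) := by
            refine Finset.sum_congr rfl (fun t _ => ?_)
            by_cases hit : i < f t
            · simp only [hit, true_and, if_pos]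
              rw [Finset.sum_boole]
            · simp [hit]
    rw [hstep]
    refine Finset.sum_congr rfl (fun t _ => ?_)
    by_cases hit : i < f t
    · rw [if_pos hit, if_pos hit]
      have hiB : i ∉ A ∩ Finset.Iio (f t) := fun hc => hiA (Finset.mem_inter.mp hc).1
      have hce := count_event (i := i) (c := f t) (B := A ∩ Finset.Iio (f t))
        hit.le Finset.inter_subset_right hiB
      rw [hcardAI t] at hce
      have hC : 0 < Nat.choose (f t : ℕ) (t : ℕ) := Nat.choose_pos (hfle t)
      have hcast : (((f t : ℕ) + 1 : ℝ) * (Nat.choose (f t : ℕ) (t : ℕ) : ℝ)) *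
          (((Finset.univ.filter fun σ : Equiv.Perm (Fin n) =>
            predSet σ i ∩ Finset.Iic (f t) = A ∩ Finset.Iio (f t)).card : ℝ))
          = (Nat.factorial n : ℝ) := by
        exact_mod_cast congrArg (Nat.cast : ℕ → ℝ) hce
      have hden : (0:ℝ) < ((f t : ℕ) + 1 : ℝ) * (Nat.choose (f t : ℕ) (t : ℕ) : ℝ) := by
        have : (0:ℝ) < (Nat.choose (f t : ℕ) (t : ℕ) : ℝ) := by exact_mod_cast hC
        positivity
      rw [div_eq_div_iff (ne_of_gt hnfac) (ne_of_gt hden)]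
      linarith [hcast]
    · rw [if_neg hit, if_neg hit, zero_div]
  · intro s
    set i := f s with hidef
    have hiA : i ∈ A := hfA s
    have hpt : ∀ σ : Equiv.Perm (Fin n),
        (if (beta (predSet σ i) < beta A ∧
            beta A ≤ beta (insert i (predSet σ i))) then (1:ℝ) else 0)
        = (if predSet σ i ∩ Finset.Iic i = A ∩ Finset.Iio i then (1:ℝ) else 0)
          - ∑ t : Fin A.card, (if (i < f t ∧
              predSet σ i ∩ Finset.Iic (f t) = (A ∩ Finset.Iio (f t)).erase i)
              then (1:ℝ) else 0) := by
      intro σ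
      set S := predSet σ i with hSdef
      have hiS : i ∉ S := not_mem_predSet σ i
      have hchar := char2 hiA hiS
      have he0 : (S ∩ Finset.Iic i = A ∩ Finset.Iio i) ↔
          (S ∩ Finset.Iio i = A ∩ Finset.Iio i) := by
        have he := evt (S := S) (c := i) (R := A ∩ Finset.Iio i)
          Finset.inter_subset_right
        constructor
        · intro h; exact (he.mpr h).2
        · intro h; exact he.mp ⟨hiS, h⟩
      have hcond : ∀ t : Fin A.card,
          (i < f t ∧ S ∩ Finset.Iic (f t) = (A ∩ Finset.Iio (f t)).erase i) ↔
          (f t ∈ A ∧ i < f t ∧ f t ∉ S ∧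
            S ∩ Finset.Iio (f t) = (A ∩ Finset.Iio (f t)).erase i) := by
        intro t
        have he := evt (S := S) (c := f t) (R := (A ∩ Finset.Iio (f t)).erase i)
          ((Finset.erase_subset _ _).trans Finset.inter_subset_right)
        constructor
        · rintro ⟨h1, h2⟩
          obtain ⟨h3, h4⟩ := he.mpr h2
          exact ⟨hfA t, h1, h3, h4⟩
        · rintro ⟨-, h1, h2, h3⟩
          exact ⟨h1, he.mp ⟨h2, h3⟩⟩
      have hiff : (beta S < beta A ∧ beta A ≤ beta (insert i S)) ↔
          ((S ∩ Finset.Iic i = A ∩ Finset.Iio i) ∧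
            ¬∃ t : Fin A.card, i < f t ∧
              S ∩ Finset.Iic (f t) = (A ∩ Finset.Iio (f t)).erase i) := by
        rw [hchar]
        constructor
        · rintro ⟨h1, h2⟩
          refine ⟨he0.mpr h1, ?_⟩
          rintro ⟨t, ht⟩
          obtain ⟨ha, hb, hc, hd⟩ := (hcond t).mp ht
          exact h2 ⟨f t, ha, hb, hc, hd⟩
        · rintro ⟨h1, h2⟩
          refine ⟨he0.mp h1, ?_⟩
          rintro ⟨j, hj1, hj2, hj3, hj4⟩
          obtain ⟨t, rfl⟩ := hfsurj j hj1
          exact h2 ⟨t, (hcond t).mpr ⟨hj1, hj2, hj3, hj4⟩⟩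
      have hsub : ∀ t : Fin A.card, i < f t →
          S ∩ Finset.Iic (f t) = (A ∩ Finset.Iio (f t)).erase i →
          S ∩ Finset.Iic i = A ∩ Finset.Iio i := by
        intro t hit h
        ext x
        rw [Finset.mem_inter, Finset.mem_Iic, Finset.mem_inter, Finset.mem_Iio]
        constructor
        · rintro ⟨hx1, hx2⟩
          have hxi : x ≠ i := fun hc => hiS (hc ▸ hx1)
          have hxlt : x < i := lt_of_le_of_ne hx2 hxi
          have hm : x ∈ (A ∩ Finset.Iio (f t)).erase i := by
            rw [← h, Finset.mem_inter, Finset.mem_Iic]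
            exact ⟨hx1, (hxlt.trans hit).le⟩
          rw [Finset.mem_erase, Finset.mem_inter] at hm
          exact ⟨hm.2.1, hxlt⟩
        · rintro ⟨hx1, hx2⟩
          have hm : x ∈ S ∩ Finset.Iic (f t) := by
            rw [h, Finset.mem_erase, Finset.mem_inter, Finset.mem_Iio]
            exact ⟨ne_of_lt hx2, hx1, hx2.trans hit⟩
          rw [Finset.mem_inter] at hm
          exact ⟨hm.1, hx2.le⟩
      have hkey : ∀ t t' : Fin A.card, i < f t → f t < f t' →
          S ∩ Finset.Iic (f t) = (A ∩ Finset.Iio (f t)).erase i →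
          S ∩ Finset.Iic (f t') = (A ∩ Finset.Iio (f t')).erase i → False := by
        intro t t' hit hlt h h'
        have hft : f t ∈ S := by
          have hm : f t ∈ (A ∩ Finset.Iio (f t')).erase i := by
            rw [Finset.mem_erase, Finset.mem_inter, Finset.mem_Iio]
            exact ⟨ne_of_gt hit, hfA t, hlt⟩
          rw [← h'] at hm
          exact (Finset.mem_inter.mp hm).1
        have hm : f t ∈ (A ∩ Finset.Iio (f t)).erase i := by
          rw [← h, Finset.mem_inter, Finset.mem_Iic]
          exact ⟨hft, le_refl _⟩
        rw [Finset.mem_erase, Finset.mem_inter, Finset.mem_Iio] at hm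
        exact absurd hm.2.2 (lt_irrefl _)
      by_cases h0 : S ∩ Finset.Iic i = A ∩ Finset.Iio i
      · by_cases hex : ∃ t : Fin A.card, i < f t ∧
            S ∩ Finset.Iic (f t) = (A ∩ Finset.Iio (f t)).erase i
        · obtain ⟨t, ht⟩ := hex
          have hsum : (∑ t' : Fin A.card, if (i < f t' ∧
              S ∩ Finset.Iic (f t') = (A ∩ Finset.Iio (f t')).erase i)
              then (1:ℝ) else 0) = 1 := by
            rw [Finset.sum_eq_single_of_mem t (Finset.mem_univ t)]
            · rw [if_pos ht]
            · intro t' _ hne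
              rw [if_neg]
              rintro ⟨hc1, hc2⟩
              rcases Ne.lt_or_gt (fun hc => hne (hfinj hc)) with hlt | hlt
              · exact hkey t' t hc1 hlt hc2 ht.2
              · exact hkey t t' ht.1 hlt ht.2 hc2
          rw [hsum, if_pos h0, if_neg]
          · norm_num
          · rw [hiff]
            rintro ⟨-, hno⟩
            exact hno ⟨t, ht⟩
        · rw [if_pos (hiff.mpr ⟨h0, hex⟩), if_pos h0, Finset.sum_eq_zero, sub_zero]
          intro t _
          rw [if_neg (fun hc => hex ⟨t, hc⟩)]
      · rw [if_neg, if_neg h0, Finset.sum_eq_zero, sub_zero]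
        · intro t _
          rw [if_neg]
          rintro ⟨hc1, hc2⟩
          exact h0 (hsub t hc1 hc2)
        · rw [hiff]
          rintro ⟨hc, -⟩
          exact h0 hc
    have hstep : shapley n w q i
        = (((Finset.univ.filter fun σ : Equiv.Perm (Fin n) =>
            predSet σ i ∩ Finset.Iic i = A ∩ Finset.Iio i).card : ℝ)) / (Nat.factorial n)
          - ∑ t : Fin A.card, (if i < f t then
              (((Finset.univ.filter fun σ : Equiv.Perm (Fin n) =>
                predSet σ i ∩ Finset.Iic (f t) = (A ∩ Finset.Iio (f t)).erase i).card : ℝ))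
              else 0) / (Nat.factorial n) := by
      unfold shapley
      rw [← Finset.sum_div, ← sub_div]
      congr 1
      calc ∑ σ : Equiv.Perm (Fin n),
            ((if q ≤ ∑ j ∈ insert i (Finset.univ.filter fun j => σ j < σ i), w j
                then (1:ℝ) else 0)
              - (if q ≤ ∑ j ∈ Finset.univ.filter (fun j => σ j < σ i), w j
                then (1:ℝ) else 0))
          = ∑ σ : Equiv.Perm (Fin n),
              ((if predSet σ i ∩ Finset.Iic i = A ∩ Finset.Iio i then (1:ℝ) else 0)
                - ∑ t : Fin A.card, (if (i < f t ∧
                    predSet σ i ∩ Finset.Iic (f t) = (A ∩ Finset.Iio (f t)).erase i)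
                    then (1:ℝ) else 0)) :=
            Finset.sum_congr rfl (fun σ _ => by
              rw [predSet_eq, hdiff i σ, hpt σ])
        _ = (∑ σ : Equiv.Perm (Fin n),
              (if predSet σ i ∩ Finset.Iic i = A ∩ Finset.Iio i then (1:ℝ) else 0))
            - ∑ σ : Equiv.Perm (Fin n), ∑ t : Fin A.card, (if (i < f t ∧
                predSet σ i ∩ Finset.Iic (f t) = (A ∩ Finset.Iio (f t)).erase i)
                then (1:ℝ) else 0) := Finset.sum_sub_distrib _ _
        _ = _ := by
            rw [Finset.sum_boole, Finset.sum_comm]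
            congr 1
            refine Finset.sum_congr rfl (fun t _ => ?_)
            by_cases hit : i < f t
            · simp only [hit, true_and, if_pos]
              rw [Finset.sum_boole]
            · simp [hit]
    rw [hstep]
    congr 1
    · -- first term
      have hiB : i ∉ A ∩ Finset.Iio i := by
        rw [Finset.mem_inter, Finset.mem_Iio]
        rintro ⟨-, hc⟩
        exact absurd hc (lt_irrefl i)
      have hce := count_event (i := i) (c := i) (B := A ∩ Finset.Iio i)
        (le_refl i) Finset.inter_subset_right hiB
      rw [hcardAI s] at hce
      have hC : 0 < Nat.choose (i : ℕ) (s : ℕ) := Nat.choose_pos (hfle s)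
      have hcast : (((i : ℕ) + 1 : ℝ) * (Nat.choose (i : ℕ) (s : ℕ) : ℝ)) *
          (((Finset.univ.filter fun σ : Equiv.Perm (Fin n) =>
            predSet σ i ∩ Finset.Iic i = A ∩ Finset.Iio i).card : ℝ))
          = (Nat.factorial n : ℝ) := by
        exact_mod_cast congrArg (Nat.cast : ℕ → ℝ) hce
      have hden : (0:ℝ) < ((i : ℕ) + 1 : ℝ) * (Nat.choose (i : ℕ) (s : ℕ) : ℝ) := by
        have h1 : (0:ℝ) < (Nat.choose (i : ℕ) (s : ℕ) : ℝ) := by exact_mod_cast hC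
        positivity
      rw [div_eq_div_iff (ne_of_gt hnfac) (ne_of_gt hden)]
      linarith [hcast]
    · -- sum term
      refine Finset.sum_congr rfl (fun t _ => ?_)
      by_cases hit : i < f t
      · rw [if_pos hit, if_pos hit]
        have hiB : i ∉ (A ∩ Finset.Iio (f t)).erase i := Finset.notMem_erase i _
        have hce := count_event (i := i) (c := f t) (B := (A ∩ Finset.Iio (f t)).erase i)
          hit.le ((Finset.erase_subset _ _).trans Finset.inter_subset_right) hiB
        have hBcard : ((A ∩ Finset.Iio (f t)).erase i).card = (t : ℕ) - 1 := by
          rw [Finset.card_erase_of_mem, hcardAI t]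
          rw [Finset.mem_inter, Finset.mem_Iio]
          exact ⟨hiA, hit⟩
        rw [hBcard] at hce
        have hC : 0 < Nat.choose (f t : ℕ) ((t : ℕ) - 1) :=
          Nat.choose_pos (le_trans (Nat.sub_le _ _) (hfle t))
        have hcast : (((f t : ℕ) + 1 : ℝ) * (Nat.choose (f t : ℕ) ((t : ℕ) - 1) : ℝ)) *
            (((Finset.univ.filter fun σ : Equiv.Perm (Fin n) =>
              predSet σ i ∩ Finset.Iic (f t) = (A ∩ Finset.Iio (f t)).erase i).card : ℝ))
            = (Nat.factorial n : ℝ) := by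
          exact_mod_cast congrArg (Nat.cast : ℕ → ℝ) hce
        have hden : (0:ℝ) < ((f t : ℕ) + 1 : ℝ) *
            (Nat.choose (f t : ℕ) ((t : ℕ) - 1) : ℝ) := by
          have h1 : (0:ℝ) < (Nat.choose (f t : ℕ) ((t : ℕ) - 1) : ℝ) := by exact_mod_cast hC
          positivity
        rw [div_eq_div_iff (ne_of_gt hnfac) (ne_of_gt hden)]
        linarith [hcast]
      · rw [if_neg hit, if_neg hit, zero_div]
end

section
/- Let d ≥ 2 be an integer and wᵢ = d^{n−i} for i ∈ {1,…,n}. Let q ∈ (0, w(N)], and write ⌈q⌉ in base d as (t₁…tₙ)_d. If all digits tᵢ ∈ {0,1}, then A(q) = {i : tᵢ = 1}. Otherwise, let ℓ be minimal with t_ℓ > 1; then there exists a maximal k < ℓ with t_k = 0, and A(q) = {i < k : tᵢ = 1} ∪ {k}. -/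
open Finset

private lemma geom_aux {d : ℕ} (hd : 2 ≤ d) (M : ℕ) :
    ∑ j ∈ range M, (d-1) * d^j = d^M - 1 := by
  induction M with
  | zero => simp
  | succ M ih =>
    rw [sum_range_succ, ih, pow_succ]
    have h1 : 1 ≤ d^M := Nat.one_le_pow _ _ (by omega)
    have h2 : (d-1) * d^M = d * d^M - d^M := by rw [Nat.sub_mul, one_mul]
    have h3 : d^M ≤ d * d^M := Nat.le_mul_of_pos_left _ (by omega)
    have h4 : d ^ M * d = d * d ^ M := by ring
    omega

private lemma sum_range_pow_lt {d : ℕ} (hd : 2 ≤ d) (M : ℕ) :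
    ∑ j ∈ range M, d^j < d^M := by
  have h1 : 1 ≤ d^M := Nat.one_le_pow _ _ (by omega)
  have h2 : ∑ j ∈ range M, d^j ≤ ∑ j ∈ range M, (d-1) * d^j := by
    apply sum_le_sum
    intro j _
    exact Nat.le_mul_of_pos_left _ (by omega)
  rw [geom_aux hd] at h2
  omega

private lemma symm_lt {c : ℕ} (hc : 2 ≤ c) {E F : Finset ℕ} {M : ℕ}
    (hMF : M ∈ F) (hME : M ∉ E) (hhi : ∀ j, M < j → (j ∈ E ↔ j ∈ F)) :
    ∑ j ∈ E, c^j < ∑ j ∈ F, c^j := by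
  rw [← sum_filter_add_sum_filter_not E (fun j => M < j),
      ← sum_filter_add_sum_filter_not F (fun j => M < j)]
  have heq : E.filter (fun j => M < j) = F.filter (fun j => M < j) := by
    ext j; simp only [mem_filter]
    constructor
    · rintro ⟨h1, h2⟩; exact ⟨(hhi j h2).1 h1, h2⟩
    · rintro ⟨h1, h2⟩; exact ⟨(hhi j h2).2 h1, h2⟩
  rw [heq]
  apply Nat.add_lt_add_left
  have hEsub : E.filter (fun j => ¬ M < j) ⊆ range M := by
    intro j hj
    simp only [mem_filter] at hj
    rw [mem_range]
    rcases hj with ⟨hjE, hjM⟩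
    have : j ≠ M := fun h => hME (h ▸ hjE)
    omega
  calc ∑ j ∈ E.filter (fun j => ¬ M < j), c^j
      ≤ ∑ j ∈ range M, c^j := sum_le_sum_of_subset hEsub
    _ < c^M := sum_range_pow_lt hc M
    _ ≤ ∑ j ∈ F.filter (fun j => ¬ M < j), c^j := by
        apply single_le_sum (f := fun j => c^j) (fun i _ => Nat.zero_le _)
        simp [hMF]

private lemma locate {c : ℕ} (hc : 2 ≤ c) {E F : Finset ℕ}
    (h : ∑ j ∈ E, c^j < ∑ j ∈ F, c^j) :
    ∃ M, M ∈ F ∧ M ∉ E ∧ ∀ j, M < j → (j ∈ E ↔ j ∈ F) := by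
  have hne : E ≠ F := by rintro rfl; exact lt_irrefl _ h
  have hD : ((E \ F) ∪ (F \ E)).Nonempty := by
    rw [nonempty_iff_ne_empty]
    intro hemp
    apply hne
    ext j
    have h1 : j ∉ (E \ F) ∪ (F \ E) := hemp ▸ notMem_empty j
    simp only [mem_union, mem_sdiff] at h1
    constructor <;> intro hj <;> by_contra hk <;> tauto
  set M := ((E \ F) ∪ (F \ E)).max' hD with hM
  have hMmem : M ∈ (E \ F) ∪ (F \ E) := max'_mem _ _
  have hhi : ∀ j, M < j → (j ∈ E ↔ j ∈ F) := by
    intro j hj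
    by_contra hne2
    have hjD : j ∈ (E \ F) ∪ (F \ E) := by
      simp only [mem_union, mem_sdiff]; tauto
    exact absurd (le_max' _ _ hjD) (by omega)
  simp only [mem_union, mem_sdiff] at hMmem
  rcases hMmem with ⟨hME, hMF⟩ | ⟨hMF, hME⟩
  · exact absurd (symm_lt hc hME hMF (fun j hj => (hhi j hj).symm)) (by omega)
  · exact ⟨M, hMF, hME, hhi⟩

private lemma mono_lt {d : ℕ} (hd : 2 ≤ d) {E F : Finset ℕ}
    (h : ∑ j ∈ E, 2^j < ∑ j ∈ F, 2^j) : ∑ j ∈ E, d^j < ∑ j ∈ F, d^j := by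
  obtain ⟨M, hMF, hME, hhi⟩ := locate le_rfl h
  exact symm_lt hd hMF hME hhi

private lemma mono_le {d : ℕ} (hd : 2 ≤ d) {E F : Finset ℕ}
    (h : ∑ j ∈ E, 2^j ≤ ∑ j ∈ F, 2^j) : ∑ j ∈ E, d^j ≤ ∑ j ∈ F, d^j := by
  by_contra hc
  push_neg at hc
  obtain ⟨M, hME, hMF, hhi⟩ := locate hd hc
  exact absurd (symm_lt le_rfl hME hMF hhi) (by omega)

private lemma inj2 {E F : Finset ℕ} (h : ∑ j ∈ E, 2^j = ∑ j ∈ F, 2^j) : E = F := by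
  by_contra hne
  have hD : ((E \ F) ∪ (F \ E)).Nonempty := by
    rw [nonempty_iff_ne_empty]
    intro hemp
    apply hne
    ext j
    have h1 : j ∉ (E \ F) ∪ (F \ E) := hemp ▸ notMem_empty j
    simp only [mem_union, mem_sdiff] at h1
    constructor <;> intro hj <;> by_contra hk <;> tauto
  set M := ((E \ F) ∪ (F \ E)).max' hD with hM
  have hMmem : M ∈ (E \ F) ∪ (F \ E) := max'_mem _ _
  have hhi : ∀ j, M < j → (j ∈ E ↔ j ∈ F) := by
    intro j hj
    by_contra hne2
    have hjD : j ∈ (E \ F) ∪ (F \ E) := by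
      simp only [mem_union, mem_sdiff]; tauto
    exact absurd (le_max' _ _ hjD) (by omega)
  simp only [mem_union, mem_sdiff] at hMmem
  rcases hMmem with ⟨hME, hMF⟩ | ⟨hMF, hME⟩
  · have := symm_lt le_rfl hME hMF (fun j hj => (hhi j hj).symm); omega
  · have := symm_lt le_rfl hMF hME hhi; omega

private lemma mod_expand {d : ℕ} (hd : 2 ≤ d) (m : ℕ) (n : ℕ) :
    ∑ j ∈ range n, (m / d^j % d) * d^j = m % d^n := by
  induction n with
  | zero => simp [Nat.mod_one]
  | succ n ih =>
    rw [sum_range_succ, ih, pow_succ, Nat.mod_mul]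
    ring


/-- Finding `A(q)` when the weights are `wᵢ = d^(n-i)` (agent `i : Fin n` is the
paper's agent `i+1`, with weight `d^(n-1-i)`). `t i` is the `i`-th base-`d` digit
of `⌈q⌉` (most significant first), and `A` is the unique set with
`q ∈ (w(A⁻), w(A)]`, given via its `β`-predecessor `Pm`. -/
theorem stmt16 (n d : ℕ) (hd : 2 ≤ d) (q : ℝ)
    (hq1 : 0 < q) (hq2 : q ≤ ∑ i : Fin n, (d:ℝ)^(n - 1 - (i:ℕ)))
    (A Pm : Finset (Fin n))
    (hβ : (∑ i ∈ Pm, 2^(n - 1 - (i:ℕ)) : ℕ) + 1 = ∑ i ∈ A, 2^(n - 1 - (i:ℕ)))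
    (hlo : (∑ i ∈ Pm, (d:ℝ)^(n - 1 - (i:ℕ))) < q)
    (hhi : q ≤ ∑ i ∈ A, (d:ℝ)^(n - 1 - (i:ℕ)))
    (t : Fin n → ℕ) (ht : ∀ i : Fin n, t i = ((⌈q⌉.toNat) / d^(n - 1 - (i:ℕ))) % d) :
    ((∀ i, t i ≤ 1) → A = Finset.univ.filter (fun i => t i = 1)) ∧
    (∀ l : Fin n, 1 < t l → (∀ i, i < l → t i ≤ 1) →
      ∃ k : Fin n, k < l ∧ t k = 0 ∧ (∀ k', k' < l → t k' = 0 → k' ≤ k) ∧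
        A = insert k (Finset.univ.filter (fun i => i < k ∧ t i = 1))) := by
  classical
  -- basic setup
  have einj : Function.Injective (fun i : Fin n => n - 1 - (i:ℕ)) := by
    intro i j hij
    simp only at hij
    have hi := i.isLt; have hj := j.isLt
    exact Fin.ext (by omega)
  have conv : ∀ (c : ℕ) (S : Finset (Fin n)),
      ∑ i ∈ S, c^(n - 1 - (i:ℕ)) =
        ∑ j ∈ S.image (fun i : Fin n => n - 1 - (i:ℕ)), c^j := by
    intro c S
    rw [Finset.sum_image (fun i _ j _ h => einj h)]
  have key_le : ∀ {S T : Finset (Fin n)},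
      (∑ i ∈ S, 2^(n - 1 - (i:ℕ))) ≤ ∑ i ∈ T, 2^(n - 1 - (i:ℕ)) →
      (∑ i ∈ S, d^(n - 1 - (i:ℕ))) ≤ ∑ i ∈ T, d^(n - 1 - (i:ℕ)) := by
    intro S T h
    rw [conv 2 S, conv 2 T] at h
    rw [conv d S, conv d T]
    exact mono_le hd h
  have key_lt : ∀ {S T : Finset (Fin n)},
      (∑ i ∈ S, 2^(n - 1 - (i:ℕ))) < ∑ i ∈ T, 2^(n - 1 - (i:ℕ)) →
      (∑ i ∈ S, d^(n - 1 - (i:ℕ))) < ∑ i ∈ T, d^(n - 1 - (i:ℕ)) := by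
    intro S T h
    rw [conv 2 S, conv 2 T] at h
    rw [conv d S, conv d T]
    exact mono_lt hd h
  have key_inj : ∀ {S T : Finset (Fin n)},
      (∑ i ∈ S, 2^(n - 1 - (i:ℕ))) = ∑ i ∈ T, 2^(n - 1 - (i:ℕ)) → S = T := by
    intro S T h
    rw [conv 2 S, conv 2 T] at h
    exact Finset.image_injective einj (inj2 h)
  have hcast : ∀ S : Finset (Fin n),
      ((∑ i ∈ S, d^(n - 1 - (i:ℕ)) : ℕ) : ℝ) = ∑ i ∈ S, (d:ℝ)^(n - 1 - (i:ℕ)) := by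
    intro S; push_cast; ring
  set m : ℕ := (⌈q⌉).toNat with hmdef
  have hq0 : (0:ℤ) < ⌈q⌉ := Int.ceil_pos.mpr hq1
  have hmq : (m:ℤ) = ⌈q⌉ := Int.toNat_of_nonneg (by omega)
  have hm2 : m ≤ ∑ i ∈ A, d^(n - 1 - (i:ℕ)) := by
    have h1 : (⌈q⌉ : ℤ) ≤ ((∑ i ∈ A, d^(n - 1 - (i:ℕ)) : ℕ) : ℤ) := by
      rw [Int.ceil_le]
      push_cast
      exact hhi
    omega
  have hm1 : ∑ i ∈ Pm, d^(n - 1 - (i:ℕ)) < m := by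
    have h1 : ((∑ i ∈ Pm, d^(n - 1 - (i:ℕ)) : ℕ) : ℤ) < ⌈q⌉ := by
      rw [Int.lt_ceil]
      rw [show ((((∑ i ∈ Pm, d^(n - 1 - (i:ℕ)) : ℕ) : ℤ)) : ℝ) = ∑ i ∈ Pm, (d:ℝ)^(n - 1 - (i:ℕ)) by push_cast; ring]
      exact hlo
    omega
  -- n positive
  have hn : 0 < n := by
    by_contra hc
    push_neg at hc
    interval_cases n
    simp at hq2
    linarith
  -- image of univ
  have himg : (Finset.univ : Finset (Fin n)).image (fun i : Fin n => n - 1 - (i:ℕ)) =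
      Finset.range n := by
    ext j
    simp only [Finset.mem_image, Finset.mem_univ, true_and, Finset.mem_range]
    constructor
    · rintro ⟨i, rfl⟩; have := i.isLt; omega
    · intro hj; exact ⟨⟨n - 1 - j, by omega⟩, by simp; omega⟩
  have huniv : ∑ i : Fin n, d^(n - 1 - (i:ℕ)) = ∑ j ∈ Finset.range n, d^j := by
    rw [conv d Finset.univ, himg]
  have hmn : m < d^n := by
    have h1 : ∑ i ∈ A, d^(n - 1 - (i:ℕ)) ≤ ∑ i : Fin n, d^(n - 1 - (i:ℕ)) :=
      Finset.sum_le_sum_of_subset (Finset.subset_univ A)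
    have h2 := sum_range_pow_lt hd n
    omega
  -- digit expansion of m as a Fin-sum
  have hrev : ∀ i : Fin n, ((Fin.rev i : Fin n) : ℕ) = n - 1 - (i:ℕ) := by
    intro i
    rw [Fin.val_rev]
    have := i.isLt
    omega
  have hM : m = ∑ i : Fin n, t i * d^(n - 1 - (i:ℕ)) := by
    have h1 : m = ∑ j ∈ Finset.range n, (m / d^j % d) * d^j := by
      rw [mod_expand hd m n, Nat.mod_eq_of_lt hmn]
    rw [h1, ← Fin.sum_univ_eq_sum_range (fun j => (m / d^j % d) * d^j) n]
    apply Fintype.sum_bijective Fin.rev Fin.rev_involutive.bijective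
    intro x
    have hx := x.isLt
    rw [ht (Fin.rev x), hrev x]
    have e : n - 1 - (n - 1 - (x:ℕ)) = (x:ℕ) := by omega
    rw [e]
  have ht_lt : ∀ i : Fin n, t i < d := by
    intro i; rw [ht i]; exact Nat.mod_lt _ (by omega)
  -- sums over upper tails
  have htail : ∀ (c : ℕ) (a : Fin n),
      ∑ i ∈ Finset.univ.filter (fun i : Fin n => a < i), c^(n - 1 - (i:ℕ)) =
        ∑ j ∈ Finset.range (n - 1 - (a:ℕ)), c^j := by
    intro c a
    rw [conv c]
    congr 1
    ext j
    simp only [Finset.mem_image, Finset.mem_filter, Finset.mem_univ, true_and,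
      Finset.mem_range]
    constructor
    · rintro ⟨i, hai, rfl⟩
      have h1 := i.isLt
      have h2 : (a:ℕ) < (i:ℕ) := hai
      omega
    · intro hj
      have ha := a.isLt
      refine ⟨⟨n - 1 - j, by omega⟩, ?_, by simp; omega⟩
      show (a:ℕ) < n - 1 - j
      omega
  constructor
  · -- Part 1
    intro h01
    set B := Finset.univ.filter (fun i => t i = 1) with hB
    have hmB : m = ∑ i ∈ B, d^(n - 1 - (i:ℕ)) := by
      rw [hM, hB, Finset.sum_filter]
      apply Finset.sum_congr rfl
      intro i _
      have h := h01 i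
      have : t i = 0 ∨ t i = 1 := by omega
      rcases this with h2 | h2 <;> simp [h2]
    have h1 : ∑ i ∈ Pm, 2^(n - 1 - (i:ℕ)) < ∑ i ∈ B, 2^(n - 1 - (i:ℕ)) := by
      by_contra hc
      push_neg at hc
      have := key_le hc
      omega
    have h2 : ∑ i ∈ B, 2^(n - 1 - (i:ℕ)) ≤ ∑ i ∈ A, 2^(n - 1 - (i:ℕ)) := by
      by_contra hc
      push_neg at hc
      have := key_lt hc
      omega
    have h3 : ∑ i ∈ A, 2^(n - 1 - (i:ℕ)) = ∑ i ∈ B, 2^(n - 1 - (i:ℕ)) := by omega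
    exact key_inj h3
  · -- Part 2
    intro l hl1 hl2
    -- existence of a zero digit before l
    have hK : (Finset.univ.filter (fun i : Fin n => i < l ∧ t i = 0)).Nonempty := by
      by_contra hc
      rw [Finset.not_nonempty_iff_eq_empty, Finset.filter_eq_empty_iff] at hc
      have hall : ∀ i : Fin n, i < l → t i = 1 := by
        intro i hi
        have h1 := hl2 i hi
        have h2 := hc (Finset.mem_univ i)
        simp only [not_and] at h2
        have := h2 hi
        omega
      -- m is too big
      have hsplit := Finset.sum_filter_add_sum_filter_not Finset.univ
        (fun i : Fin n => i < l) (fun i : Fin n => t i * d^(n - 1 - (i:ℕ)))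
      have hfle : Finset.univ.filter (fun i : Fin n => ¬ i < l) =
          insert l (Finset.univ.filter (fun i : Fin n => l < i)) := by
        ext i
        simp only [Finset.mem_filter, Finset.mem_univ, true_and, Finset.mem_insert,
          not_lt]
        constructor
        · intro h
          rcases eq_or_lt_of_le h with h2 | h2
          · left; exact h2.symm
          · right; exact h2
        · rintro (rfl | h)
          · exact le_refl _
          · exact le_of_lt h
      have hlnot : l ∉ Finset.univ.filter (fun i : Fin n => l < i) := by
        simp
      -- lower bound for m
      have hlow : ∑ i ∈ Finset.univ.filter (fun i : Fin n => i < l),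
            d^(n - 1 - (i:ℕ)) + 2 * d^(n - 1 - (l:ℕ)) ≤ m := by
        rw [hM, ← hsplit, hfle, Finset.sum_insert hlnot]
        have e1 : ∑ i ∈ Finset.univ.filter (fun i : Fin n => i < l),
            t i * d^(n - 1 - (i:ℕ)) =
            ∑ i ∈ Finset.univ.filter (fun i : Fin n => i < l), d^(n - 1 - (i:ℕ)) := by
          apply Finset.sum_congr rfl
          intro i hi
          simp only [Finset.mem_filter, Finset.mem_univ, true_and] at hi
          rw [hall i hi, one_mul]
        rw [e1]
        have e2 : 2 * d^(n - 1 - (l:ℕ)) ≤ t l * d^(n - 1 - (l:ℕ)) :=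
          Nat.mul_le_mul_right _ hl1
        omega
      -- upper bound for m
      have hup : m ≤ ∑ i ∈ Finset.univ.filter (fun i : Fin n => i < l),
            d^(n - 1 - (i:ℕ)) + 2 * d^(n - 1 - (l:ℕ)) - 1 := by
      -- m ≤ N univ < lhs
        have h0 : ∑ i ∈ A, d^(n - 1 - (i:ℕ)) ≤ ∑ i : Fin n, d^(n - 1 - (i:ℕ)) :=
          Finset.sum_le_sum_of_subset (Finset.subset_univ A)
        have h1 : m ≤ ∑ i : Fin n, d^(n - 1 - (i:ℕ)) := le_trans hm2 h0
        have hsplit2 := Finset.sum_filter_add_sum_filter_not Finset.univ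
          (fun i : Fin n => i < l) (fun i : Fin n => d^(n - 1 - (i:ℕ)))
        have h2 : ∑ i ∈ Finset.univ.filter (fun i : Fin n => ¬ i < l),
            d^(n - 1 - (i:ℕ)) < 2 * d^(n - 1 - (l:ℕ)) := by
          rw [hfle, Finset.sum_insert hlnot, htail d l]
          have h3 := sum_range_pow_lt hd (n - 1 - (l:ℕ))
          omega
        rw [← hsplit2] at h1
        omega
      omega
    -- k = max of K
    set k := (Finset.univ.filter (fun i : Fin n => i < l ∧ t i = 0)).max' hK with hkdef
    have hkmem := Finset.max'_mem (Finset.univ.filter (fun i : Fin n => i < l ∧ t i = 0)) hK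
    rw [Finset.mem_filter] at hkmem
    obtain ⟨-, hkl, htk⟩ := hkmem
    have hmax : ∀ k' : Fin n, k' < l → t k' = 0 → k' ≤ k := by
      intro k' h1 h2
      apply Finset.le_max'
      rw [Finset.mem_filter]
      exact ⟨Finset.mem_univ _, h1, h2⟩
    have hbetween : ∀ i : Fin n, k < i → i < l → t i = 1 := by
      intro i h1 h2
      have h3 := hl2 i h2
      have h4 : t i ≠ 0 := by
        intro h5
        have := hmax i h2 h5
        exact absurd h1 (not_lt.mpr this)
      omega
    refine ⟨k, hkl, htk, hmax, ?_⟩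
    set B := insert k (Finset.univ.filter (fun i => i < k ∧ t i = 1)) with hB
    set B' := Finset.univ.filter (fun i : Fin n => (i < k ∧ t i = 1) ∨ k < i) with hB'
    have hknotin : k ∉ Finset.univ.filter (fun i : Fin n => i < k ∧ t i = 1) := by
      simp
    -- sum over B' for any base
    have hB'sum : ∀ c : ℕ, ∑ i ∈ B', c^(n - 1 - (i:ℕ)) =
        (∑ i ∈ Finset.univ.filter (fun i : Fin n => i < k ∧ t i = 1),
          c^(n - 1 - (i:ℕ))) +
        ∑ j ∈ Finset.range (n - 1 - (k:ℕ)), c^j := by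
      intro c
      rw [hB', Finset.filter_or, Finset.sum_union, htail c k]
      rw [Finset.disjoint_left]
      intro i hi1 hi2
      simp only [Finset.mem_filter, Finset.mem_univ, true_and] at hi1 hi2
      exact absurd hi2 (not_lt.mpr (le_of_lt hi1.1))
    have hgeom2 : ∑ j ∈ Finset.range (n - 1 - (k:ℕ)), 2^j = 2^(n - 1 - (k:ℕ)) - 1 := by
      have := geom_aux (le_refl 2) (n - 1 - (k:ℕ))
      simpa using this
    have h2pos : 1 ≤ 2^(n - 1 - (k:ℕ)) := Nat.one_le_pow _ _ (by omega)
    -- binary successor relation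
    have hb : (∑ i ∈ B', 2^(n - 1 - (i:ℕ))) + 1 = ∑ i ∈ B, 2^(n - 1 - (i:ℕ)) := by
      rw [hB'sum 2, hgeom2, hB, Finset.sum_insert hknotin]
      omega
    -- decompose m at k
    have hsplitk := Finset.sum_filter_add_sum_filter_not Finset.univ
      (fun i : Fin n => i < k) (fun i : Fin n => t i * d^(n - 1 - (i:ℕ)))
    have hfk : Finset.univ.filter (fun i : Fin n => ¬ i < k) =
        insert k (Finset.univ.filter (fun i : Fin n => k < i)) := by
      ext i
      simp only [Finset.mem_filter, Finset.mem_univ, true_and, Finset.mem_insert, not_lt]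
      constructor
      · intro h
        rcases eq_or_lt_of_le h with h2 | h2
        · left; exact h2.symm
        · right; exact h2
      · rintro (rfl | h)
        · exact le_refl _
        · exact le_of_lt h
    have hknotin2 : k ∉ Finset.univ.filter (fun i : Fin n => k < i) := by simp
    have hsmall : ∑ i ∈ Finset.univ.filter (fun i : Fin n => i < k),
        t i * d^(n - 1 - (i:ℕ)) =
        ∑ i ∈ Finset.univ.filter (fun i : Fin n => i < k ∧ t i = 1),
          d^(n - 1 - (i:ℕ)) := by
      conv_rhs => rw [← Finset.filter_filter, Finset.sum_filter]
      apply Finset.sum_congr rfl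
      intro i hi
      simp only [Finset.mem_filter, Finset.mem_univ, true_and] at hi
      have h1 : i < l := lt_trans hi hkl
      have h2 := hl2 i h1
      have : t i = 0 ∨ t i = 1 := by omega
      rcases this with h3 | h3 <;> simp [h3]
    have hmsplit : m = (∑ i ∈ Finset.univ.filter (fun i : Fin n => i < k ∧ t i = 1),
          d^(n - 1 - (i:ℕ))) +
        ∑ i ∈ Finset.univ.filter (fun i : Fin n => k < i), t i * d^(n - 1 - (i:ℕ)) := by
      rw [hM, ← hsplitk, hfk, Finset.sum_insert hknotin2, hsmall, htk]
      ring
    -- upper bound : m ≤ N(B)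
    have hm_le_B : m ≤ ∑ i ∈ B, d^(n - 1 - (i:ℕ)) := by
      rw [hmsplit, hB, Finset.sum_insert hknotin]
      have h1 : ∑ i ∈ Finset.univ.filter (fun i : Fin n => k < i),
          t i * d^(n - 1 - (i:ℕ)) ≤
          ∑ i ∈ Finset.univ.filter (fun i : Fin n => k < i),
            (d - 1) * d^(n - 1 - (i:ℕ)) := by
        apply Finset.sum_le_sum
        intro i _
        exact Nat.mul_le_mul_right _ (by have := ht_lt i; omega)
      have h2 : ∑ i ∈ Finset.univ.filter (fun i : Fin n => k < i),
          (d - 1) * d^(n - 1 - (i:ℕ)) = d^(n - 1 - (k:ℕ)) - 1 := by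
        rw [← Finset.mul_sum, htail d k, Finset.mul_sum, geom_aux hd]
      have h3 : 1 ≤ d^(n - 1 - (k:ℕ)) := Nat.one_le_pow _ _ (by omega)
      omega
    -- lower bound : N(B') < m
    have hB'_lt : ∑ i ∈ B', d^(n - 1 - (i:ℕ)) < m := by
      rw [hB'sum d, hmsplit]
      apply Nat.add_lt_add_left
      -- split the tail at l
      have hsplitl := Finset.sum_filter_add_sum_filter_not
        (Finset.univ.filter (fun i : Fin n => k < i))
        (fun i : Fin n => i < l) (fun i : Fin n => t i * d^(n - 1 - (i:ℕ)))
      have hsplitl' := Finset.sum_filter_add_sum_filter_not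
        (Finset.univ.filter (fun i : Fin n => k < i))
        (fun i : Fin n => i < l) (fun i : Fin n => d^(n - 1 - (i:ℕ)))
      have hfkl : (Finset.univ.filter (fun i : Fin n => k < i)).filter
          (fun i : Fin n => ¬ i < l) =
          insert l (Finset.univ.filter (fun i : Fin n => l < i)) := by
        rw [Finset.filter_filter]
        ext i
        simp only [Finset.mem_filter, Finset.mem_univ, true_and, Finset.mem_insert,
          not_lt]
        constructor
        · rintro ⟨h1, h2⟩
          rcases eq_or_lt_of_le h2 with h3 | h3
          · left; exact h3.symm
          · right; exact h3
        · rintro (rfl | h)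
          · exact ⟨hkl, le_refl _⟩
          · exact ⟨lt_trans hkl h, le_of_lt h⟩
      have hlnotin : l ∉ Finset.univ.filter (fun i : Fin n => l < i) := by simp
      have hmid : ∑ i ∈ (Finset.univ.filter (fun i : Fin n => k < i)).filter
            (fun i : Fin n => i < l), t i * d^(n - 1 - (i:ℕ)) =
          ∑ i ∈ (Finset.univ.filter (fun i : Fin n => k < i)).filter
            (fun i : Fin n => i < l), d^(n - 1 - (i:ℕ)) := by
        apply Finset.sum_congr rfl
        intro i hi
        simp only [Finset.mem_filter, Finset.mem_univ, true_and] at hi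
        rw [hbetween i hi.1 hi.2, one_mul]
      -- tail beyond l
      have htl : ∑ i ∈ Finset.univ.filter (fun i : Fin n => l < i),
          d^(n - 1 - (i:ℕ)) < d^(n - 1 - (l:ℕ)) := by
        rw [htail d l]
        exact sum_range_pow_lt hd _
      have htll : 2 * d^(n - 1 - (l:ℕ)) ≤ t l * d^(n - 1 - (l:ℕ)) :=
        Nat.mul_le_mul_right _ hl1
      -- rewrite the goal tail using htail backwards
      rw [← htail d k]
      rw [← hsplitl, ← hsplitl', hfkl, Finset.sum_insert hlnotin,
        Finset.sum_insert hlnotin, hmid]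
      have hztail : 0 ≤ ∑ i ∈ Finset.univ.filter (fun i : Fin n => l < i),
          t i * d^(n - 1 - (i:ℕ)) := Nat.zero_le _
      omega
    -- conclude B = A
    have c1 : ∑ i ∈ B', 2^(n - 1 - (i:ℕ)) < ∑ i ∈ A, 2^(n - 1 - (i:ℕ)) := by
      by_contra hc
      push_neg at hc
      have := key_le hc
      omega
    have c2 : ∑ i ∈ Pm, 2^(n - 1 - (i:ℕ)) < ∑ i ∈ B, 2^(n - 1 - (i:ℕ)) := by
      by_contra hc
      push_neg at hc
      have := key_le hc
      omega
    have c3 : ∑ i ∈ A, 2^(n - 1 - (i:ℕ)) = ∑ i ∈ B, 2^(n - 1 - (i:ℕ)) := by omega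
    exact key_inj c3
end

section
/- Let (wᵢ)_{i≥1} be an infinite super-increasing sequence (wᵢ ≥ Σ_{j>i} wⱼ) with sum w(∞). For every q ∈ (0, w(∞)), there exists a non-empty subset P of the positive integers such that either q = w(P), or P = {a₀,…,a_r} is finite and q ∈ (w(P⁻), w(P)], where P⁻ = {a₀,…,a_{r−1}} ∪ {a_r+1, a_r+2, …}. -/
open Filter Topology

open Classical in
/-- Greedy partial sums. -/
noncomputable def sg (w : ℕ → ℝ) (q : ℝ) : ℕ → ℝ
  | 0 => 0
  | (i+1) => sg w q i + if sg w q i + (∑' j : ℕ, w (i + 1 + j)) < q then w i else 0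

/-- For an infinite super-increasing sequence with sum `w(∞)` and any
`q ∈ (0, w(∞))`, there is a nonempty set `P` of indices with either `q = w(P)`,
or `P` finite (with maximum `a`) and `q ∈ (w(P⁻), w(P)]`, where
`P⁻ = (P \ {a}) ∪ {b | b > a}`. -/
theorem stmt18 (w : ℕ → ℝ) (hpos : ∀ i, 0 < w i) (hsum : Summable w)
    (hsi : ∀ i : ℕ, (∑' j : ℕ, w (i + 1 + j)) ≤ w i)
    (q : ℝ) (hq1 : 0 < q) (hq2 : q < ∑' i : ℕ, w i) :
    ∃ P : Set ℕ, P.Nonempty ∧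
      (q = ∑' i : ℕ, P.indicator w i ∨
        ∃ a ∈ P, (∀ b ∈ P, b ≤ a) ∧ P.Finite ∧
          (∑' i : ℕ, ((P \ {a}) ∪ {b | a < b}).indicator w i) < q ∧
          q ≤ ∑' i : ℕ, P.indicator w i) := by
  classical
  set s : ℕ → ℝ := sg w q with hs
  set T : ℕ → ℝ := fun i => ∑' j : ℕ, w (i + j) with hT
  have hTsummable : ∀ i : ℕ, Summable fun j => w (i + j) := by
    intro i
    have := (summable_nat_add_iff i).mpr hsum
    exact this.congr (fun j => by rw [add_comm])
  have hTpos : ∀ i, 0 < T i := by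
    intro i
    exact Summable.tsum_pos (hTsummable i) (fun j => (hpos _).le) 0 (hpos _)
  have hTrec : ∀ i, T i = w i + T (i + 1) := by
    intro i
    have h := Summable.tsum_eq_zero_add (hTsummable i)
    simpa [hT, Nat.add_zero, Nat.add_assoc, Nat.add_comm 1] using h
  have hT0 : Tendsto T atTop (nhds 0) := by
    have h := tendsto_sum_nat_add w
    refine h.congr fun i => ?_
    exact tsum_congr fun j => by rw [add_comm]
  set P : Set ℕ := { i | s i + T (i + 1) < q } with hPdef
  have hmem : ∀ i, i ∈ P ↔ s i + T (i + 1) < q := fun i => Iff.rfl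
  have hstep : ∀ i, s (i + 1) = s i + if i ∈ P then w i else 0 := by
    intro i
    show sg w q (i+1) = _
    rw [sg]
    congr 1
  -- invariant : q ≤ s i + T i
  have hinv : ∀ i, q ≤ s i + T i := by
    intro i
    induction i with
    | zero =>
      have : T 0 = ∑' i, w i := tsum_congr fun j => by rw [Nat.zero_add]
      simp only [hs, sg, zero_add, this]
      exact hq2.le
    | succ n ih =>
      rw [hstep n]
      by_cases h : n ∈ P
      · simp only [h, if_true]
        have := hTrec n
        linarith
      · simp only [h, if_false]
        have := (hmem n).not.mp h
        linarith
  have hmono : Monotone s := by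
    apply monotone_nat_of_le_succ
    intro n
    rw [hstep n]
    by_cases h : n ∈ P <;> simp [h, (hpos n).le]
  have hsq : ∀ i ∈ P, s i < q := by
    intro i hi
    have := (hmem i).mp hi
    have := hTpos (i + 1)
    linarith
  have hsformula : ∀ n, s n = ∑ j ∈ Finset.range n, P.indicator w j := by
    intro n
    induction n with
    | zero => simp [hs, sg]
    | succ m ih =>
      simp only [hstep m, Finset.sum_range_succ, ← ih]
      by_cases h : m ∈ P <;> simp [h]
  have hindsummable : Summable (P.indicator w) := hsum.indicator P
  have htendsto : Tendsto s atTop (nhds (∑' i, P.indicator w i)) := by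
    have h := hindsummable.hasSum.tendsto_sum_nat
    exact h.congr fun n => (hsformula n).symm
  have hqle : q ≤ ∑' i, P.indicator w i := by
    have h : Tendsto (fun n => s n + T n) atTop (nhds ((∑' i, P.indicator w i) + 0)) :=
      htendsto.add hT0
    rw [add_zero] at h
    exact ge_of_tendsto' h hinv
  have hPne : P.Nonempty := by
    by_contra hne
    rw [Set.not_nonempty_iff_eq_empty] at hne
    have hz : ∀ n, s n = 0 := by
      intro n
      rw [hsformula n]
      simp [hne]
    have : q ≤ 0 := by
      have h : Tendsto (fun n => s n + T n) atTop (nhds (0:ℝ)) := by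
        refine Tendsto.congr (fun n => ?_) hT0
        rw [hz n, zero_add]
      exact ge_of_tendsto' h hinv
    linarith
  refine ⟨P, hPne, ?_⟩
  by_cases hfin : P.Finite
  · -- finite case
    right
    obtain ⟨a, haP, hamax⟩ := Set.Finite.exists_maximalFor id P hfin hPne
    have hamax' : ∀ b ∈ P, b ≤ a := by
      intro b hb
      by_contra hab
      push_neg at hab
      have h2 : b ≤ a := hamax hb hab.le
      omega
    -- s is constant ≥ a+1
    have hconst : ∀ n, a + 1 ≤ n → s n = s (a + 1) := by
      intro n hn
      induction n with
      | zero => omega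
      | succ m ih =>
        rcases Nat.lt_or_ge m (a+1) with h | h
        · have : m = a := by omega
          subst this; rfl
        · have hmP : m ∉ P := fun hc => by have := hamax' m hc; omega
          rw [hstep m, if_neg hmP, ih h, add_zero]
    -- w(P) = s (a+1)
    have hwP : ∑' i, P.indicator w i = s (a + 1) := by
      rw [hsformula]
      refine tsum_eq_sum ?_
      intro b hb
      simp only [Finset.mem_range, not_lt] at hb
      have : b ∉ P := fun hc => by have := hamax' b hc; omega
      simp [Set.indicator_apply, this]
    -- q ≤ s (a+1)
    have hqsa : q ≤ s (a + 1) := by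
      have h : Tendsto (fun n => s (a+1) + T n) atTop (nhds (s (a+1) + 0)) :=
        tendsto_const_nhds.add hT0
    -- q ≤ s(a+1) + T n for n ≥ a+1
      rw [add_zero] at h
      refine ge_of_tendsto h ?_
      filter_upwards [Filter.eventually_ge_atTop (a+1)] with n hn
      have := hinv n
      rw [hconst n hn] at this
      exact this
    -- w(P⁻) = s a + T (a+1)
    have hdisj : Disjoint (P \ {a}) {b | a < b} := by
      rw [Set.disjoint_left]
      intro b hb hb2
      have := hamax' b hb.1
      exact absurd hb2 (by simpa using this.not_gt)
    have hsum1 : Summable ((P \ {a}).indicator w) := hsum.indicator _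
    have hsum2 : Summable (({b | a < b} : Set ℕ).indicator w) := hsum.indicator _
    have hsplit : ∑' i, ((P \ {a}) ∪ {b | a < b}).indicator w i =
        (∑' i, (P \ {a}).indicator w i) + ∑' i, ({b | a < b} : Set ℕ).indicator w i := by
      rw [← Summable.tsum_add hsum1 hsum2]
      exact tsum_congr fun i => by
        rw [Set.indicator_union_of_disjoint hdisj]
    have hpart1 : ∑' i, (P \ {a}).indicator w i = s a := by
      have h1 : ∑' i, (P \ {a}).indicator w i
          = ∑ j ∈ Finset.range (a+1), (P \ {a}).indicator w j := by
        refine tsum_eq_sum ?_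
        intro b hb
        simp only [Finset.mem_range, not_lt] at hb
        have : b ∉ P \ {a} := by
          intro hc
          have := hamax' b hc.1
          have : b ≠ a := hc.2
          omega
        simp [Set.indicator_apply, this]
      rw [h1, Finset.sum_range_succ]
      have ha0 : (P \ {a}).indicator w a = 0 := by
        simp [Set.indicator_apply]
      rw [ha0, add_zero, hsformula]
      refine Finset.sum_congr rfl fun j hj => ?_
      simp only [Finset.mem_range] at hj
      have : j ∈ P \ {a} ↔ j ∈ P := by
        constructor
        · exact fun h => h.1
        · exact fun h => ⟨h, by simp only [Set.mem_singleton_iff]; omega⟩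
      simp [Set.indicator_apply, this]
    have hpart2 : ∑' i, ({b | a < b} : Set ℕ).indicator w i = T (a + 1) := by
      have hinj : Function.Injective (fun j : ℕ => a + 1 + j) := add_right_injective (a + 1)
      have hsupp : Function.support (({b | a < b} : Set ℕ).indicator w) ⊆
          Set.range (fun j : ℕ => a + 1 + j) := by
        intro b hb
        simp only [Function.mem_support, ne_eq, Set.indicator_apply_ne_zero,
          Set.mem_inter_iff] at hb
        have hab : a < b := hb.1
        exact ⟨b - (a+1), by show a + 1 + (b - (a+1)) = b; omega⟩
      have := hinj.tsum_eq hsupp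
      rw [← this]
      refine tsum_congr fun j => ?_
      have : (a + 1 + j) ∈ ({b | a < b} : Set ℕ) := by show a < a + 1 + j; omega
      simp [Set.indicator_apply, this]
    have haPc : s a + T (a + 1) < q := (hmem a).mp haP
    refine ⟨a, haP, hamax', hfin, ?_, ?_⟩
    · rw [hsplit, hpart1, hpart2]; exact haPc
    · rw [hwP]; exact hqsa
  · -- infinite case
    left
    have hinf : P.Infinite := hfin
    have hle : ∀ n, s n ≤ q := by
      intro n
      by_contra hlt
      push_neg at hlt
      set ε := s n - q with hε
      have hεpos : 0 < ε := by linarith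
      have hw0 : Tendsto w atTop (nhds 0) := hsum.tendsto_atTop_zero
      obtain ⟨N, hN⟩ := (Metric.tendsto_atTop.mp hw0) ε hεpos
      obtain ⟨i, hiP, hi⟩ := hinf.exists_gt (max n N)
      have hwi : w i < ε := by
        have := hN i (le_of_max_le_right hi.le)
        rw [Real.dist_eq, sub_zero, abs_of_pos (hpos i)] at this
        exact this
      have h1 : s (i + 1) = s i + w i := by rw [hstep i, if_pos hiP]
      have h2 : s i < q := hsq i hiP
      have h3 : s n ≤ s (i + 1) := hmono (by omega)
      rw [h1] at h3
      linarith
    have : ∑' i, P.indicator w i ≤ q := le_of_tendsto' htendsto hle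
    linarith
end

section
/- Let Algorithm Find-Set process a super-increasing weight vector w₁ > ⋯ > wₙ > 0 and quota q ∈ (0, w(N)] as follows: starting with A = ∅, for i = 1 to n, add i to A if q > w(A ∪ {i+1,…,n}). Then the returned set A equals A(q), the unique non-empty subset P with q ∈ (w(P⁻), w(P)]. -/
/-- The greedy Find-Set algorithm: starting from `∅`, it iterates over agents
`i = 1, …, n` in order and adds `i` to `A` whenever `q > w(A ∪ {i+1,…,n})`. -/
noncomputable def findSet (n : ℕ) (w : Fin n → ℝ) (q : ℝ) : Finset (Fin n) :=
  (List.finRange n).foldl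
    (fun A i =>
      if (∑ j ∈ A ∪ Finset.univ.filter (fun j => i < j), w j) < q then insert i A else A)
    ∅

lemma geom2 (M : ℕ) : ∑ t ∈ Finset.range M, 2^t = 2^M - 1 := by
  induction M with
  | zero => simp
  | succ m ih =>
    rw [Finset.sum_range_succ, ih, pow_succ]
    have := Nat.one_le_two_pow (n := m)
    omega

lemma filter_beta (n k : ℕ) (hk : k < n) :
    ∑ j ∈ Finset.univ.filter (fun j : Fin n => k < (j:ℕ)), 2^(n-1-(j:ℕ)) = 2^(n-1-k) - 1 := by
  rw [Finset.sum_filter,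
    Fin.sum_univ_eq_sum_range (fun j => if k < j then 2^(n-1-j) else 0), ← Finset.sum_filter]
  have h1 : (Finset.range n).filter (fun j => k < j) = Finset.Ico (k+1) n := by
    ext j; simp [Finset.mem_Ico]; omega
  rw [h1, Finset.sum_Ico_eq_sum_range]
  have h2 : n - (k+1) = n - 1 - k := by omega
  rw [h2]
  have h3 : ∀ t ∈ Finset.range (n-1-k), 2^(n-1-(k+1+t)) = 2^((n-1-k)-1-t) := by
    intro t _; congr 1; omega
  rw [Finset.sum_congr rfl h3, Finset.sum_range_reflect (fun t => 2^t) (n-1-k), geom2]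

lemma findSet_aux (n : ℕ) (w : Fin n → ℝ) (q : ℝ) (hq1 : 0 < q) :
    ∀ (m k : ℕ) (A : Finset (Fin n)), n - k = m →
    (∀ a ∈ A, (a:ℕ) < k) →
    q ≤ ∑ j ∈ A ∪ Finset.univ.filter (fun j : Fin n => k ≤ (j:ℕ)), w j →
    (A = ∅ ∨ (A.Nonempty ∧ ∃ Pm : Finset (Fin n),
        (∑ i ∈ Pm, 2^(n - 1 - (i:ℕ)) : ℕ) + 1 = (∑ i ∈ A, 2^(n - 1 - (i:ℕ))) ∧
        (∑ i ∈ Pm, w i) < q)) →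
    (((List.finRange n).drop k).foldl
        (fun A i => if (∑ j ∈ A ∪ Finset.univ.filter (fun j => i < j), w j) < q
          then insert i A else A) A).Nonempty ∧
    ∃ Pm : Finset (Fin n),
      (∑ i ∈ Pm, 2^(n - 1 - (i:ℕ)) : ℕ) + 1 =
        (∑ i ∈ ((List.finRange n).drop k).foldl
          (fun A i => if (∑ j ∈ A ∪ Finset.univ.filter (fun j => i < j), w j) < q
            then insert i A else A) A, 2^(n - 1 - (i:ℕ))) ∧
      (∑ i ∈ Pm, w i) < q ∧
      q ≤ ∑ i ∈ ((List.finRange n).drop k).foldl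
          (fun A i => if (∑ j ∈ A ∪ Finset.univ.filter (fun j => i < j), w j) < q
            then insert i A else A) A, w i := by
  intro m
  induction m with
  | zero =>
    intro k A hm hlt hsum hgood
    have hk : n ≤ k := by omega
    have hdrop : (List.finRange n).drop k = [] :=
      List.drop_eq_nil_of_le (by simp [hk])
    rw [hdrop]
    simp only [List.foldl_nil]
    have hfilt : Finset.univ.filter (fun j : Fin n => k ≤ (j:ℕ)) = ∅ := by
      ext j; simp; omega
    rw [hfilt, Finset.union_empty] at hsum
    rcases hgood with rfl | ⟨hne, Pm, hβ, hPm⟩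
    · simp at hsum; linarith
    · exact ⟨hne, Pm, hβ, hPm, hsum⟩
  | succ m ih =>
    intro k A hm hlt hsum hgood
    have hk : k < n := by omega
    set i : Fin n := ⟨k, hk⟩ with hi
    have hdrop : (List.finRange n).drop k = i :: (List.finRange n).drop (k+1) := by
      rw [List.drop_eq_getElem_cons (by simp [hk])]
      simp [List.getElem_finRange, hi, Fin.cast]
    rw [hdrop, List.foldl_cons]
    have hfeq : Finset.univ.filter (fun j : Fin n => i < j)
        = Finset.univ.filter (fun j : Fin n => k < (j:ℕ)) := by
      apply Finset.filter_congr; intro j _; simp [Fin.lt_def, hi]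
    by_cases hcond : (∑ j ∈ A ∪ Finset.univ.filter (fun j => i < j), w j) < q
    · rw [if_pos hcond]
      have hiA : i ∉ A := fun h => by have := hlt i h; simp [hi] at this
      apply ih (k+1) (insert i A) (by omega)
      · intro a ha
        rcases Finset.mem_insert.mp ha with rfl | ha
        · simp [hi]
        · exact Nat.lt_succ_of_lt (hlt a ha)
      · have hset : insert i A ∪ Finset.univ.filter (fun j : Fin n => k+1 ≤ (j:ℕ))
            = A ∪ Finset.univ.filter (fun j : Fin n => k ≤ (j:ℕ)) := by
          ext j
          simp only [Finset.mem_union, Finset.mem_insert, Finset.mem_filter,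
            Finset.mem_univ, true_and]
          constructor
          · rintro ((rfl | hA) | hj)
            · right; simp [hi]
            · left; exact hA
            · right; omega
          · rintro (hA | hj)
            · left; right; exact hA
            · rcases Nat.eq_or_lt_of_le hj with hj' | hj'
              · left; left; apply Fin.ext; simp [hi]; omega
              · right; omega
        rw [hset]; exact hsum
      · right
        refine ⟨⟨i, Finset.mem_insert_self _ _⟩,
          A ∪ Finset.univ.filter (fun j => i < j), ?_, ?_⟩
        · have hdisj : Disjoint A (Finset.univ.filter (fun j : Fin n => i < j)) := by
            rw [Finset.disjoint_left]
            intro a ha ha'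
            simp only [Finset.mem_filter, Finset.mem_univ, true_and, Fin.lt_def, hi] at ha'
            have := hlt a ha; omega
          rw [Finset.sum_union hdisj, Finset.sum_insert hiA, hfeq, filter_beta n k hk]
          have h1 : 1 ≤ 2^(n-1-k) := Nat.one_le_two_pow
          simp only [hi]
          omega
        · exact hcond
    · rw [if_neg hcond]
      apply ih (k+1) A (by omega)
      · intro a ha; exact Nat.lt_succ_of_lt (hlt a ha)
      · push_neg at hcond
        have : Finset.univ.filter (fun j : Fin n => i < j)
            = Finset.univ.filter (fun j : Fin n => k+1 ≤ (j:ℕ)) := by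
          rw [hfeq]; apply Finset.filter_congr; intro j _; omega
        rwa [this] at hcond
      · exact hgood

/-- Correctness of the greedy algorithm: for super-increasing weights and
`q ∈ (0, w(N)]`, the returned set `A` equals `A(q)`, i.e. it is the (unique)
nonempty set satisfying `q ∈ (w(A⁻), w(A)]`, where `A⁻` is the `β`-predecessor
of `A` (`β(A⁻) + 1 = β(A)` with `β(C) = ∑_{i ∈ C} 2^(n-i)`). -/
theorem stmt19 (n : ℕ) (w : Fin n → ℝ) (hpos : ∀ i, 0 < w i) (hdec : StrictAnti w)
    (hsi : ∀ i : Fin n, (∑ j ∈ Finset.univ.filter (fun j => i < j), w j) < w i)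
    (q : ℝ) (hq1 : 0 < q) (hq2 : q ≤ ∑ i : Fin n, w i) :
    (findSet n w q).Nonempty ∧
    ∃ Pm : Finset (Fin n),
      (∑ i ∈ Pm, 2^(n - 1 - (i:ℕ)) : ℕ) + 1 = (∑ i ∈ findSet n w q, 2^(n - 1 - (i:ℕ))) ∧
      (∑ i ∈ Pm, w i) < q ∧ q ≤ ∑ i ∈ findSet n w q, w i := by
  have h := findSet_aux n w q hq1 n 0 ∅ (by omega) (by simp) (by
    simp only [Finset.empty_union]
    have : Finset.univ.filter (fun j : Fin n => 0 ≤ (j:ℕ)) = Finset.univ := by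
      ext j; simp
    rw [this]; exact hq2) (Or.inl rfl)
  rw [List.drop_zero] at h
  exact h
end
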